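/- arXiv:1002.0295 — 5 statements merged into one kernel-verified Lean document; each statement's English description precedes it below -/
import Mathlib

section
/- Let C be a nonzero linear code over F_q and C_r its lift to F_{q^r}. Every codeword c of C_r of minimum (nonzero) weight is of the form c = β·c′ for some β ∈ F_{q^r} and some codeword c′ of C of minimum weight. -/
lemma hn_mono {n : ℕ} {α γ : Type} [Zero α] [Zero γ] [DecidableEq α] [DecidableEq γ]
    (x : Fin n → α) (y : Fin n → γ) (h : ∀ j, x j = 0 → y j = 0) :
    hammingNorm y ≤ hammingNorm x := by
  unfold hammingNorm
  apply Finset.card_le_card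
  intro j hj
  simp only [Finset.mem_filter, Finset.mem_univ, true_and] at *
  exact fun hx => hj (h j hx)

/-- Every minimum weight codeword of the lifted code `C_r` is a scalar
multiple `β • c'` of a minimum weight codeword `c'` of the original code `C`. -/
theorem lifted_min_weight_codeword {r n k : ℕ} (hr : 2 ≤ r)
    (F K : Type) [Field F] [Fintype F] [DecidableEq F]
    [Field K] [Fintype K] [DecidableEq K] [Algebra F K]
    (hrank : Module.finrank F K = r)
    (H : Matrix (Fin k) (Fin n) F)
    (hC : ∃ c : Fin n → F, H.mulVec c = 0 ∧ c ≠ 0)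
    (c : Fin n → K) (hc : (H.map (algebraMap F K)).mulVec c = 0) (hc0 : c ≠ 0)
    (hmin : ∀ u : Fin n → K, (H.map (algebraMap F K)).mulVec u = 0 → u ≠ 0 →
      hammingNorm c ≤ hammingNorm u) :
    ∃ (β : K) (c' : Fin n → F),
      H.mulVec c' = 0 ∧ c' ≠ 0 ∧
      (∀ u : Fin n → F, H.mulVec u = 0 → u ≠ 0 → hammingNorm c' ≤ hammingNorm u) ∧
      c = fun j => β * algebraMap F K (c' j) := by
  classical
  set φ := algebraMap F K with hφ
  have hφinj : Function.Injective φ := (algebraMap F K).injective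
  -- embedding preserves the code
  have hembed : ∀ u : Fin n → F, H.mulVec u = 0 →
      (H.map φ).mulVec (fun j => φ (u j)) = 0 := by
    intro u hu
    funext m
    have h0 := congrFun hu m
    simp only [Matrix.mulVec, Matrix.map_apply, dotProduct, Pi.zero_apply] at h0 ⊢
    rw [← map_zero φ, ← h0, map_sum]
    simp [map_mul]
  -- pick coordinate where c is nonzero
  obtain ⟨j0, hj0⟩ := Function.ne_iff.mp hc0
  simp only [Pi.zero_apply] at hj0
  -- basis of K over F
  let b := Module.Basis.ofVectorSpace F K
  have hrepr : b.repr (c j0) ≠ 0 := fun h => hj0 (b.repr.map_eq_zero_iff.mp h)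
  obtain ⟨i, hi⟩ := Finsupp.ne_iff.mp hrepr
  simp only [Finsupp.coe_zero, Pi.zero_apply] at hi
  -- the coordinate functional
  set f : K →ₗ[F] F := (Finsupp.lapply i).comp (b.repr : K →ₗ[F] _) with hf
  set c' : Fin n → F := fun j => f (c j) with hc'def
  have hc'j0 : c' j0 ≠ 0 := hi
  -- c' is a codeword
  have hc'code : H.mulVec c' = 0 := by
    funext m
    have h0 := congrFun hc m
    simp only [Matrix.mulVec, Matrix.map_apply, dotProduct, Pi.zero_apply] at h0 ⊢
    have key : ∀ j, H m j * c' j = f (φ (H m j) * c j) := by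
      intro j
      rw [hφ, ← Algebra.smul_def, map_smul]
      rfl
    rw [Finset.sum_congr rfl (fun j _ => key j), ← map_sum, h0, map_zero]
  -- support inclusion
  have hsupp : ∀ j, c j = 0 → c' j = 0 := by
    intro j hj
    simp only [hc'def, hj, map_zero]
  have hc'0 : c' ≠ 0 := fun h => hc'j0 (congrFun h j0)
  -- min weight of c'
  have hwtle : hammingNorm c' ≤ hammingNorm c := hn_mono c c' hsupp
  have hminF : ∀ u : Fin n → F, H.mulVec u = 0 → u ≠ 0 → hammingNorm c' ≤ hammingNorm u := by
    intro u hu hu0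
    have hne : (fun j => φ (u j)) ≠ 0 := by
      intro h
      apply hu0
      funext j
      have h1 : φ (u j) = 0 := congrFun h j
      exact hφinj (by simpa using h1)
    have h1 := hmin _ (hembed u hu) hne
    have h2 : hammingNorm (fun j => φ (u j)) ≤ hammingNorm u := by
      apply hn_mono
      intro j hj
      simp [hj]
    exact le_trans hwtle (le_trans h1 h2)
  -- the scalar
  set β : K := c j0 * (φ (c' j0))⁻¹ with hβ
  have hφc'j0 : φ (c' j0) ≠ 0 := fun h => hc'j0 (hφinj (by simpa using h))
  set w : Fin n → K := fun j => c j - β * φ (c' j) with hw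
  have hwcode : (H.map φ).mulVec w = 0 := by
    have hcc : (H.map φ).mulVec (fun j => φ (c' j)) = 0 := hembed c' hc'code
    funext m
    have h0 := congrFun hc m
    have h1 := congrFun hcc m
    simp only [Matrix.mulVec, dotProduct, Pi.zero_apply] at h0 h1 ⊢
    have key : ∀ j, (H.map φ) m j * w j
        = (H.map φ) m j * c j - β * ((H.map φ) m j * φ (c' j)) := by
      intro j
      show (H.map φ) m j * (c j - β * φ (c' j)) = _
      ring
    rw [Finset.sum_congr rfl (fun j _ => key j), Finset.sum_sub_distrib, h0,
      ← Finset.mul_sum, h1, mul_zero, sub_zero]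
  have hwj0 : w j0 = 0 := by
    show c j0 - β * φ (c' j0) = 0
    rw [hβ]
    field_simp
    simp
  have hwzero : w = 0 := by
    by_contra hwne
    have h1 := hmin w hwcode hwne
    have h2 : hammingNorm w < hammingNorm c := by
      unfold hammingNorm
      apply Finset.card_lt_card
      constructor
      · intro j hj
        simp only [Finset.mem_filter, Finset.mem_univ, true_and] at *
        intro hcj
        apply hj
        show c j - β * φ (c' j) = 0
        rw [hcj, hsupp j hcj, map_zero, mul_zero, sub_zero]
      · intro hsub
        have hmem := hsub (by simp [hj0] : j0 ∈ Finset.univ.filter fun j => c j ≠ 0)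
        simp only [Finset.mem_filter, Finset.mem_univ, true_and] at hmem
        exact hmem hwj0
    omega
  refine ⟨β, c', hc'code, hc'0, hminF, ?_⟩
  funext j
  have hz : c j - β * φ (c' j) = 0 := congrFun hwzero j
  exact sub_eq_zero.mp hz
end

section
/- The covering radius of the code C_{(m,r)} over F_{q^r} with parity check matrix H_m (the parity check matrix of the q-ary Hamming code of length n = (q^m−1)/(q−1)) equals min{r, m}. -/
set_option maxHeartbeats 1000000

lemma hamming_cover {q m n : ℕ} {F : Type} [Field F] [Fintype F] [DecidableEq F]
    (hq : Fintype.card F = q)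
    (H : Matrix (Fin m) (Fin n) F)
    (hcols : ∀ j, (fun i => H i j) ≠ 0)
    (hind : ∀ j₁ j₂, j₁ ≠ j₂ → ∀ c : F, (fun i => H i j₂) ≠ c • (fun i => H i j₁))
    (hn : n * (q - 1) = q ^ m - 1) :
    ∀ s : Fin m → F, s ≠ 0 → ∃ j, ∃ c : F, (c • fun i => H i j) = s := by
  classical
  intro s hs
  set g : Fin n × Fˣ → (Fin m → F) := fun p => (p.2 : F) • fun i => H i p.1 with hg
  have hginj : Function.Injective g := by
    rintro ⟨j₁, c₁⟩ ⟨j₂, c₂⟩ hE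
    simp only [hg] at hE
    by_cases hj : j₁ = j₂
    · subst hj
      have h0 : ((c₁ : F) - (c₂ : F)) • (fun i => H i j₁) = 0 := by
        rw [sub_smul, hE, sub_self]
      rcases smul_eq_zero.mp h0 with h | h
      · exact Prod.ext rfl (Units.ext (sub_eq_zero.mp h))
      · exact absurd h (hcols j₁)
    · exfalso
      refine hind j₁ j₂ hj (((c₂ : F)⁻¹) * (c₁ : F)) ?_
      rw [mul_smul, hE, smul_smul, inv_mul_cancel₀ c₂.ne_zero, one_smul]
  have hsub : Finset.image g Finset.univ ⊆ Finset.univ.erase 0 := by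
    intro x hx
    rcases Finset.mem_image.mp hx with ⟨p, _, rfl⟩
    refine Finset.mem_erase.mpr ⟨?_, Finset.mem_univ _⟩
    simp only [hg]
    intro h0
    rcases smul_eq_zero.mp h0 with h | h
    · exact p.2.ne_zero h
    · exact hcols p.1 h
  have hcard : (Finset.univ.erase (0 : Fin m → F)).card ≤ (Finset.image g Finset.univ).card := by
    rw [Finset.card_image_of_injective _ hginj, Finset.card_erase_of_mem (Finset.mem_univ _)]
    simp only [Finset.card_univ, Fintype.card_prod, Fintype.card_fin, Fintype.card_units,
      Fintype.card_pi, Finset.prod_const, Finset.card_univ, Fintype.card_fin, hq]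
    rw [hn]
  have heq := Finset.eq_of_subset_of_card_le hsub hcard
  have hsmem : s ∈ Finset.image g Finset.univ := by
    rw [heq]; exact Finset.mem_erase.mpr ⟨hs, Finset.mem_univ _⟩
  rcases Finset.mem_image.mp hsmem with ⟨p, _, hp⟩
  exact ⟨p.1, (p.2 : F), hp⟩

lemma mulVec_surj {q m n : ℕ} {F K : Type} [Field F] [Fintype F] [DecidableEq F]
    [Field K] [Fintype K] [DecidableEq K] [Algebra F K]
    (hq : Fintype.card F = q)
    (H : Matrix (Fin m) (Fin n) F)
    (hcols : ∀ j, (fun i => H i j) ≠ 0)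
    (hind : ∀ j₁ j₂, j₁ ≠ j₂ → ∀ c : F, (fun i => H i j₂) ≠ c • (fun i => H i j₁))
    (hn : n * (q - 1) = q ^ m - 1) :
    ∀ s : Fin m → K, ∃ v : Fin n → K, (H.map (algebraMap F K)).mulVec v = s := by
  classical
  set φ := algebraMap F K with hφ
  set colK : Fin n → (Fin m → K) := fun j => fun i => φ (H i j) with hcolK
  have hspan : Submodule.span K (Set.range colK) = ⊤ := by
    rw [eq_top_iff]
    intro x _
    have hx : x = ∑ k : Fin m, x k • (Pi.single k (1 : K) : Fin m → K) := by
      funext i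
      simp [Finset.sum_apply, Pi.single_apply, Finset.sum_ite_eq', mul_comm]
    rw [hx]
    refine Submodule.sum_mem _ fun k _ => Submodule.smul_mem _ _ ?_
    -- Pi.single k 1 ∈ span
    have hne : (Pi.single k (1 : F) : Fin m → F) ≠ 0 := by
      intro h
      have := congrFun h k
      simp at this
    obtain ⟨j, c, hc⟩ := hamming_cover hq H hcols hind hn _ hne
    have : (Pi.single k (1 : K) : Fin m → K) = φ c • colK j := by
      funext i
      have := congrFun hc i
      simp only [Pi.smul_apply, smul_eq_mul] at this
      simp only [hcolK, Pi.smul_apply, smul_eq_mul, ← map_mul, this, Pi.single_apply]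
      split <;> simp
    rw [this]
    exact Submodule.smul_mem _ _ (Submodule.subset_span ⟨j, rfl⟩)
  intro s
  have hs : s ∈ Submodule.span K (Set.range colK) := by rw [hspan]; trivial
  obtain ⟨v, hv⟩ := Submodule.mem_span_range_iff_exists_fun K |>.mp hs
  refine ⟨v, ?_⟩
  funext k
  rw [← hv]
  simp [Matrix.mulVec, dotProduct, Finset.sum_apply, hcolK, mul_comm]

lemma exists_err_r {q m r n : ℕ} {F K : Type} [Field F] [Fintype F] [DecidableEq F]
    [Field K] [Fintype K] [DecidableEq K] [Algebra F K]
    (hq : Fintype.card F = q) (hrank : Module.finrank F K = r)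
    (H : Matrix (Fin m) (Fin n) F)
    (hcols : ∀ j, (fun i => H i j) ≠ 0)
    (hind : ∀ j₁ j₂, j₁ ≠ j₂ → ∀ c : F, (fun i => H i j₂) ≠ c • (fun i => H i j₁))
    (hn : n * (q - 1) = q ^ m - 1) (hn0 : 0 < n) :
    ∀ s : Fin m → K, ∃ e : Fin n → K,
      (H.map (algebraMap F K)).mulVec e = s ∧ hammingNorm e ≤ r := by
  classical
  intro s
  set φ := algebraMap F K with hφ
  let b : Module.Basis (Fin r) F K := Module.finBasisOfFinrankEq F K hrank
  set sF : Fin r → Fin m → F := fun i k => b.repr (s k) i with hsF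
  have hex : ∀ i : Fin r, ∃ j, ∃ c : F, (c • fun i' => H i' j) = sF i := by
    intro i
    by_cases hsi : sF i = 0
    · exact ⟨⟨0, hn0⟩, 0, by rw [zero_smul, hsi]⟩
    · exact hamming_cover hq H hcols hind hn _ hsi
  choose j c hc using hex
  refine ⟨fun x => ∑ i : Fin r, if j i = x then c i • b i else 0, ?_, ?_⟩
  · funext k
    have : ∀ x, φ (H k x) * (∑ i : Fin r, if j i = x then c i • b i else 0)
        = ∑ i : Fin r, if j i = x then (c i * H k (j i)) • b i else 0 := by
      intro x
      rw [Finset.mul_sum]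
      refine Finset.sum_congr rfl fun i _ => ?_
      split
      · next h =>
          subst h
          rw [Algebra.smul_def, Algebra.smul_def, map_mul]
          ring
      · rw [mul_zero]
    simp only [Matrix.mulVec, dotProduct, Matrix.map_apply]
    rw [Finset.sum_congr rfl fun x _ => this x, Finset.sum_comm]
    have : ∀ i : Fin r, (∑ x : Fin n, if j i = x then (c i * H k (j i)) • b i else 0)
        = (sF i k) • b i := by
      intro i
      rw [Finset.sum_ite_eq]
      simp only [Finset.mem_univ, if_true]
      congr 1
      have := congrFun (hc i) k
      simpa using this
    rw [Finset.sum_congr rfl fun i _ => this i]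
    exact b.sum_repr (s k)
  · unfold hammingNorm
    have hsub : (Finset.univ.filter fun x => (∑ i : Fin r, if j i = x then c i • b i else 0) ≠ 0)
        ⊆ Finset.image j Finset.univ := by
      intro x hx
      rw [Finset.mem_filter] at hx
      by_contra hmem
      apply hx.2
      refine Finset.sum_eq_zero fun i _ => ?_
      rw [if_neg]
      intro h
      exact hmem (Finset.mem_image.mpr ⟨i, Finset.mem_univ _, h⟩)
    calc _ ≤ (Finset.image j Finset.univ).card := Finset.card_le_card hsub
      _ ≤ (Finset.univ : Finset (Fin r)).card := Finset.card_image_le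
      _ = r := by simp

lemma exists_err_m {q m n : ℕ} {F K : Type} [Field F] [Fintype F] [DecidableEq F]
    [Field K] [Fintype K] [DecidableEq K] [Algebra F K]
    (hq : Fintype.card F = q)
    (H : Matrix (Fin m) (Fin n) F)
    (hcols : ∀ j, (fun i => H i j) ≠ 0)
    (hind : ∀ j₁ j₂, j₁ ≠ j₂ → ∀ c : F, (fun i => H i j₂) ≠ c • (fun i => H i j₁))
    (hn : n * (q - 1) = q ^ m - 1) (hn0 : 0 < n) :
    ∀ s : Fin m → K, ∃ e : Fin n → K,
      (H.map (algebraMap F K)).mulVec e = s ∧ hammingNorm e ≤ m := by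
  classical
  intro s
  set φ := algebraMap F K with hφ
  set colK : Fin n → (Fin m → K) := fun j => fun i => φ (H i j) with hcolK
  have hspan : Submodule.span K (Set.range colK) = ⊤ := by
    rw [eq_top_iff]
    intro x _
    have hx : x = ∑ k : Fin m, x k • (Pi.single k (1 : K) : Fin m → K) := by
      funext i
      simp [Finset.sum_apply, Pi.single_apply, Finset.sum_ite_eq', mul_comm]
    rw [hx]
    refine Submodule.sum_mem _ fun k _ => Submodule.smul_mem _ _ ?_
    have hne : (Pi.single k (1 : F) : Fin m → F) ≠ 0 := by
      intro h
      have := congrFun h k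
      simp at this
    obtain ⟨j, c, hc⟩ := hamming_cover hq H hcols hind hn _ hne
    have : (Pi.single k (1 : K) : Fin m → K) = φ c • colK j := by
      funext i
      have := congrFun hc i
      simp only [Pi.smul_apply, smul_eq_mul] at this
      simp only [hcolK, Pi.smul_apply, smul_eq_mul, ← map_mul, this, Pi.single_apply]
      split <;> simp
    rw [this]
    exact Submodule.smul_mem _ _ (Submodule.subset_span ⟨j, rfl⟩)
  obtain ⟨tset, hsub, hspan2, hli⟩ := exists_linearIndependent K (Set.range colK)
  rw [hspan] at hspan2
  have hfin : tset.Finite := hli.setFinite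
  haveI := hfin.fintype
  have hcard : hfin.toFinset.card ≤ m := by
    rw [hfin.card_toFinset]
    have := hli.fintype_card_le_finrank
    simpa using this
  have hs : s ∈ Submodule.span K ((hfin.toFinset : Finset (Fin m → K)) : Set (Fin m → K)) := by
    rw [hfin.coe_toFinset, hspan2]; trivial
  obtain ⟨f, -, hf⟩ := Submodule.mem_span_finset.mp hs
  set pick : (Fin m → K) → Fin n :=
    fun w => if h : ∃ j, colK j = w then h.choose else ⟨0, hn0⟩ with hpickdef
  have hpick2 : ∀ w ∈ hfin.toFinset, colK (pick w) = w := by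
    intro w hw
    have h : ∃ j, colK j = w := hsub (hfin.mem_toFinset.mp hw)
    simp only [hpickdef, dif_pos h]
    exact h.choose_spec
  refine ⟨fun x => ∑ w ∈ hfin.toFinset, if pick w = x then f w else 0, ?_, ?_⟩
  · funext k
    simp only [Matrix.mulVec, dotProduct, Matrix.map_apply]
    have h1 : ∀ x, φ (H k x) * (∑ w ∈ hfin.toFinset, if pick w = x then f w else 0)
        = ∑ w ∈ hfin.toFinset, if pick w = x then φ (H k x) * f w else 0 := by
      intro x
      rw [Finset.mul_sum]
      exact Finset.sum_congr rfl fun w _ => by split <;> simp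
    rw [Finset.sum_congr rfl fun x _ => h1 x, Finset.sum_comm]
    have h2 : ∀ w ∈ hfin.toFinset,
        (∑ x : Fin n, if pick w = x then φ (H k x) * f w else 0) = w k * f w := by
      intro w hw
      rw [Finset.sum_ite_eq]
      simp only [Finset.mem_univ, if_true]
      congr 1
      exact congrFun (hpick2 w hw) k
    rw [Finset.sum_congr rfl h2]
    have h3 := congrFun hf k
    simp only [Finset.sum_apply, Pi.smul_apply, smul_eq_mul] at h3
    rw [← h3]
    exact Finset.sum_congr rfl fun w _ => mul_comm _ _
  · unfold hammingNorm
    have hsub2 : (Finset.univ.filter fun x =>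
          (∑ w ∈ hfin.toFinset, if pick w = x then f w else 0) ≠ 0)
        ⊆ Finset.image pick hfin.toFinset := by
      intro x hx
      rw [Finset.mem_filter] at hx
      by_contra hmem
      apply hx.2
      refine Finset.sum_eq_zero fun w hw => ?_
      rw [if_neg]
      intro h
      exact hmem (Finset.mem_image.mpr ⟨w, hw, h⟩)
    calc _ ≤ (Finset.image pick hfin.toFinset).card := Finset.card_le_card hsub2
      _ ≤ hfin.toFinset.card := Finset.card_image_le
      _ ≤ m := hcard

lemma lower_bd {m r n : ℕ} {F K : Type} [Field F] [Fintype F] [DecidableEq F]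
    [Field K] [Fintype K] [DecidableEq K] [Algebra F K]
    (hrank : Module.finrank F K = r)
    (H : Matrix (Fin m) (Fin n) F) :
    ∃ s : Fin m → K, ∀ e : Fin n → K,
      (H.map (algebraMap F K)).mulVec e = s → min r m ≤ hammingNorm e := by
  classical
  set φ := algebraMap F K with hφ
  obtain ⟨b⟩ : Nonempty (Module.Basis (Fin r) F K) := ⟨Module.finBasisOfFinrankEq F K hrank⟩
  refine ⟨fun k => if h : (k : ℕ) < r then b ⟨(k : ℕ), h⟩ else 0, ?_⟩
  intro e he
  set E := Finset.univ.filter (fun x => e x ≠ 0) with hEdef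
  set f : Fin r → Fin n → F := fun i x => b.repr (e x) i with hfdef
  have key : ∀ (i : Fin r) (k : Fin m),
      H.mulVec (f i) k = b.repr ((H.map φ).mulVec e k) i := by
    intro i k
    simp only [Matrix.mulVec, dotProduct, Matrix.map_apply, hfdef]
    have h1 : (∑ x, φ (H k x) * e x) = ∑ x, (H k x) • e x :=
      Finset.sum_congr rfl fun x _ => (Algebra.smul_def _ _).symm
    rw [h1, map_sum, Finsupp.finset_sum_apply]
    exact Finset.sum_congr rfl fun x _ => by
      rw [map_smul, Finsupp.smul_apply, smul_eq_mul]
  have hmul : ∀ (i : Fin r) (him : (i : ℕ) < m),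
      H.mulVec (f i) = (Pi.single (⟨(i : ℕ), him⟩ : Fin m) (1 : F) : Fin m → F) := by
    intro i him
    funext k
    rw [key i k, he]
    by_cases hk : (k : ℕ) < r
    · simp only [dif_pos hk]
      show b.repr (b ⟨(k : ℕ), hk⟩) i = _
      rw [b.repr_self]
      rw [Finsupp.single_apply, Pi.single_apply]
      have : (⟨(k : ℕ), hk⟩ : Fin r) = i ↔ k = ⟨(i : ℕ), him⟩ := by
        constructor <;> (intro h; ext; exact congrArg Fin.val h |>.symm ▸ rfl)
      split
      · next h => rw [if_pos (this.mp h)]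
      · next h => rw [if_neg fun hh => h (this.mpr hh)]
    · simp only [dif_neg hk, map_zero, Finsupp.coe_zero, Pi.zero_apply]
      rw [Pi.single_apply, if_neg]
      intro hh
      apply hk
      rw [hh]
      exact i.isLt
  set colset : Finset (Fin m → F) := Finset.image (fun x => fun i' => H i' x) E with hcolset
  have hmem : ∀ i : Fin r, H.mulVec (f i) ∈
      Submodule.span F (colset : Set (Fin m → F)) := by
    intro i
    have hrepr : H.mulVec (f i) = ∑ x ∈ E, f i x • (fun i' => H i' x) := by
      funext k
      simp only [Matrix.mulVec, dotProduct, Finset.sum_apply, Pi.smul_apply,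
        smul_eq_mul]
      rw [← Finset.sum_subset (Finset.subset_univ E) (fun x _ hx => ?_)]
      · exact Finset.sum_congr rfl fun x _ => mul_comm _ _
      · have hex : e x = 0 := by
          by_contra hc
          exact hx (Finset.mem_filter.mpr ⟨Finset.mem_univ _, hc⟩)
        simp [hfdef, hex]
    rw [hrepr]
    exact Submodule.sum_mem _ fun x hx => Submodule.smul_mem _ _
      (Submodule.subset_span (Finset.mem_coe.mpr (Finset.mem_image.mpr ⟨x, hx, rfl⟩)))
  -- the independent family
  have hcardι : Fintype.card {i : Fin r // (i : ℕ) < m} = min r m := by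
    have e1 : {i : Fin r // (i : ℕ) < m} ≃ Fin (min r m) :=
      { toFun := fun i => ⟨(i.1 : ℕ), lt_min i.1.isLt i.2⟩
        invFun := fun k => ⟨⟨(k : ℕ), lt_of_lt_of_le k.isLt (min_le_left r m)⟩,
          lt_of_lt_of_le k.isLt (min_le_right r m)⟩
        left_inv := fun i => Subtype.ext (Fin.ext rfl)
        right_inv := fun k => Fin.ext rfl }
    rw [Fintype.card_congr e1, Fintype.card_fin]
  have hgli : LinearIndependent F (fun i : {i : Fin r // (i : ℕ) < m} => H.mulVec (f i.1)) := by
    rw [Fintype.linearIndependent_iff]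
    intro g hg i0
    have hval : ∀ i : {i : Fin r // (i : ℕ) < m},
        H.mulVec (f i.1) (⟨(i0.1 : ℕ), i0.2⟩ : Fin m) = if i = i0 then 1 else 0 := by
      intro i
      rw [hmul i.1 i.2, Pi.single_apply]
      by_cases h : i = i0
      · rw [if_pos h, if_pos]
        rw [h]
      · rw [if_neg h, if_neg]
        intro hh
        apply h
        ext
        exact (congrArg Fin.val hh).symm
    have h0 := congrFun hg (⟨(i0.1 : ℕ), i0.2⟩ : Fin m)
    simp only [Finset.sum_apply, Pi.smul_apply, smul_eq_mul, Pi.zero_apply, hval,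
      mul_ite, mul_one, mul_zero, Finset.sum_ite_eq', Finset.mem_univ, if_true] at h0
    exact h0
  set W := Submodule.span F (colset : Set (Fin m → F)) with hW
  have hli2 : LinearIndependent F
      (fun i : {i : Fin r // (i : ℕ) < m} => (⟨H.mulVec (f i.1), hmem i.1⟩ : W)) :=
    LinearIndependent.of_comp W.subtype hgli
  have hfinW : Fintype.card {i : Fin r // (i : ℕ) < m} ≤ Module.finrank F W :=
    hli2.fintype_card_le_finrank
  have hWcard : Module.finrank F W ≤ E.card := by
    calc Module.finrank F W ≤ colset.card := finrank_span_finset_le_card colset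
      _ ≤ E.card := Finset.card_image_le
  calc min r m = Fintype.card {i : Fin r // (i : ℕ) < m} := hcardι.symm
    _ ≤ Module.finrank F W := hfinW
    _ ≤ E.card := hWcard
    _ = hammingNorm e := by unfold hammingNorm; rw [hEdef]


/-- The covering radius of the lifted Hamming code `C_{(m,r)}` over
`F_{q^r}` equals `min r m`. -/
theorem covering_radius_lifted_hamming {q m r n : ℕ} (hm : 1 ≤ m) (hr : 1 ≤ r)
    (F K : Type) [Field F] [Fintype F] [DecidableEq F]
    [Field K] [Fintype K] [DecidableEq K] [Algebra F K]
    (hq : Fintype.card F = q)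
    (hrank : Module.finrank F K = r)
    (H : Matrix (Fin m) (Fin n) F)
    (hcols : ∀ j, (fun i => H i j) ≠ 0)
    (hind : ∀ j₁ j₂, j₁ ≠ j₂ → ∀ c : F, (fun i => H i j₂) ≠ c • (fun i => H i j₁))
    (hn : n * (q - 1) = q ^ m - 1) :
    sSup {ρ : ℕ | ∃ v : Fin n → K,
        sInf {d : ℕ | ∃ c : Fin n → K,
          (H.map (algebraMap F K)).mulVec c = 0 ∧ hammingDist v c = d} = ρ} =
      min r m := by
  classical
  have hq2 : 2 ≤ q := by
    rw [← hq]
    exact Fintype.one_lt_card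
  have hn0 : 0 < n := by
    rcases Nat.eq_zero_or_pos n with h | h
    · exfalso
      have h2 : 2 ≤ q ^ m := le_trans hq2 (Nat.le_self_pow (by omega) q)
      rw [h] at hn
      omega
    · exact h
  obtain ⟨s₀, hs₀⟩ := lower_bd hrank H
  obtain ⟨v₀, hv₀⟩ := mulVec_surj hq H hcols hind hn s₀
  have hub : ∀ v : Fin n → K, ∃ c : Fin n → K,
      (H.map (algebraMap F K)).mulVec c = 0 ∧ hammingDist v c ≤ min r m := by
    intro v
    have hmin : ∃ e, (H.map (algebraMap F K)).mulVec e = (H.map (algebraMap F K)).mulVec v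
        ∧ hammingNorm e ≤ min r m := by
      rcases le_total r m with hrm | hmr
      · obtain ⟨e, he1, he2⟩ := exists_err_r hq hrank H hcols hind hn hn0
          ((H.map (algebraMap F K)).mulVec v)
        exact ⟨e, he1, by omega⟩
      · obtain ⟨e, he1, he2⟩ := exists_err_m hq H hcols hind hn hn0
          ((H.map (algebraMap F K)).mulVec v)
        exact ⟨e, he1, by omega⟩
    obtain ⟨e, he1, he2⟩ := hmin
    refine ⟨v - e, ?_, ?_⟩
    · rw [Matrix.mulVec_sub, he1, sub_self]
    · rw [hammingDist_comm, hammingDist_eq_hammingNorm, neg_add_eq_sub, sub_sub_cancel]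
      exact he2
  have hDub : ∀ v : Fin n → K, sInf {d : ℕ | ∃ c : Fin n → K,
      (H.map (algebraMap F K)).mulVec c = 0 ∧ hammingDist v c = d} ≤ min r m := by
    intro v
    obtain ⟨c, hc1, hc2⟩ := hub v
    exact le_trans (Nat.sInf_le ⟨c, hc1, rfl⟩) hc2
  have hmem : sInf {d : ℕ | ∃ c : Fin n → K,
      (H.map (algebraMap F K)).mulVec c = 0 ∧ hammingDist v₀ c = d} = min r m := by
    refine le_antisymm (hDub v₀) (le_csInf ?_ ?_)
    · exact ⟨hammingDist v₀ 0, 0, by simp [Matrix.mulVec_zero], rfl⟩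
    · rintro d ⟨c, hc1, rfl⟩
      have h1 : (H.map (algebraMap F K)).mulVec (v₀ - c) = s₀ := by
        rw [Matrix.mulVec_sub, hv₀, hc1, sub_zero]
      have h2 := hs₀ _ h1
      rwa [hammingDist_comm, hammingDist_eq_hammingNorm, neg_add_eq_sub]
  refine le_antisymm (csSup_le ⟨min r m, v₀, hmem⟩ ?_) (le_csSup ⟨min r m, ?_⟩ ⟨v₀, hmem⟩)
  · rintro ρ ⟨v, rfl⟩
    exact hDub v
  · rintro ρ ⟨v, rfl⟩
    exact hDub v
end

section
/- Let C_{(m,r)} be the lift to F_{q^r} of the q-ary Hamming code with parity check matrix H_m, and for 0 ≤ i ≤ min{r,m} let C_{(m,r)}(i) = {x ∈ F_{q^r}^n : d(x, C_{(m,r)}) = i}. Then the number μ_i of cosets of C_{(m,r)} contained in C_{(m,r)}(i) equals M_q(i,r)·M_q(i,m)/M_q(i,i), where M_q(k,t) = (q^t−1)(q^t−q)⋯(q^t−q^{k−1}). -/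
open Function Module Submodule Set

section Counting
variable {F : Type*} [Field F] [Fintype F] {V : Type*} [AddCommGroup V] [Module F V]

/-- helper: Nat.card of a sigma over a finite index with constant fibers -/
lemma nat_card_sigma_const {G : Type*} [Finite G] (f : G → Type*) [∀ g, Finite (f g)]
    (c : ℕ) (h : ∀ g, Nat.card (f g) = c) : Nat.card (Σ g, f g) = Nat.card G * c := by
  classical
  cases nonempty_fintype G
  have inst := fun g => Fintype.ofFinite (f g)
  rw [Nat.card_eq_fintype_card, Nat.card_eq_fintype_card, Fintype.card_sigma]
  rw [Finset.sum_congr rfl (fun g _ => ?_), Finset.sum_const, Finset.card_univ, smul_eq_mul]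
  rw [← Nat.card_eq_fintype_card, h g]

lemma nat_card_submodule [Finite V] (W : Submodule F V) :
    Nat.card W = Fintype.card F ^ finrank F W := by
  classical
  cases nonempty_fintype V
  have : Fintype W := Fintype.ofFinite W
  rw [Nat.card_eq_fintype_card, card_eq_pow_finrank (K := F) (V := W)]

lemma nat_card_V [Finite V] : Nat.card V = Fintype.card F ^ finrank F V := by
  classical
  cases nonempty_fintype V
  rw [Nat.card_eq_fintype_card, card_eq_pow_finrank (K := F) (V := V)]

/-- number of linearly independent k-tuples -/
lemma card_li_tuples [Finite V] (k : ℕ) :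
    Nat.card {f : Fin k → V // LinearIndependent F f} =
      ∏ j ∈ Finset.range k, (Fintype.card F ^ finrank F V - Fintype.card F ^ j) := by
  classical
  cases nonempty_fintype V
  induction k with
  | zero =>
    rw [Finset.range_zero, Finset.prod_empty]
    have : ∀ f : Fin 0 → V, LinearIndependent F f := fun f => linearIndependent_empty_type
    rw [Nat.card_congr (Equiv.subtypeUnivEquiv this)]
    simp [Nat.card_eq_fintype_card]
  | succ k ih =>
    have e : {f : Fin (k+1) → V // LinearIndependent F f} ≃
        Σ g : {f : Fin k → V // LinearIndependent F f},
          {v : V // v ∉ span F (Set.range g.1)} :=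
      { toFun := fun f =>
          ⟨⟨Fin.init f.1, (linearIndependent_fin_snoc.1 (by
              rw [Fin.snoc_init_self]; exact f.2)).1⟩,
           ⟨f.1 (Fin.last k), (linearIndependent_fin_snoc.1 (by
              rw [Fin.snoc_init_self]; exact f.2)).2⟩⟩
        invFun := fun gv => ⟨Fin.snoc gv.1.1 gv.2.1,
          linearIndependent_fin_snoc.2 ⟨gv.1.2, gv.2.2⟩⟩
        left_inv := fun f => by
          ext : 1; exact Fin.snoc_init_self f.1
        right_inv := fun gv => by
          refine Sigma.ext (Subtype.ext ?_) (by
            rw [Subtype.heq_iff_coe_eq] <;> simp [Fin.init_snoc, Fin.snoc_last])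
          simp }
    rw [Nat.card_congr e]
    rw [nat_card_sigma_const _ (Fintype.card F ^ finrank F V - Fintype.card F ^ k) ?_]
    · rw [ih, Finset.prod_range_succ]
    · rintro ⟨g, hg⟩
      have : Nat.card {v : V // v ∉ span F (Set.range g)} =
          Fintype.card V - Nat.card (span F (Set.range g)) := by
        rw [Nat.card_eq_fintype_card, Nat.card_eq_fintype_card,
          Fintype.card_subtype_compl]
      rw [this, nat_card_submodule, finrank_span_eq_card hg, Fintype.card_fin,
        card_eq_pow_finrank (K := F) (V := V)]
end Counting

section Maps
variable {F : Type*} [Field F] [Fintype F]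
variable {A : Type*} [AddCommGroup A] [Module F A]
variable {B : Type*} [AddCommGroup B] [Module F B]

lemma injective_iff_li_comp (b : Basis (Fin k) F A) (φ : A →ₗ[F] B) :
    Injective φ ↔ LinearIndependent F (fun j => φ (b j)) := by
  constructor
  · intro h
    exact b.linearIndependent.map' φ (LinearMap.ker_eq_bot.2 h)
  · intro h
    rw [← LinearMap.ker_eq_bot, eq_bot_iff]
    intro x hx
    have hx' : φ x = 0 := hx
    rw [← b.sum_repr x, map_sum] at hx'
    simp_rw [map_smul] at hx'
    have := Fintype.linearIndependent_iff.1 h (fun j => b.repr x j) hx'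
    rw [← b.sum_repr x]
    simp only [Submodule.mem_bot]
    rw [Finset.sum_eq_zero (fun j _ => by rw [show (b.repr x) j = 0 from this j, zero_smul])]

lemma card_inj_maps [Finite B] (b : Basis (Fin k) F A) :
    Nat.card {φ : A →ₗ[F] B // Injective φ} =
      ∏ j ∈ Finset.range k, (Fintype.card F ^ finrank F B - Fintype.card F ^ j) := by
  rw [← card_li_tuples (F := F) (V := B) k]
  exact Nat.card_congr ((Equiv.subtypeEquiv (b.constr F (M' := B)).toEquiv
    (fun g => by
      simp only [LinearEquiv.coe_toEquiv]
      rw [injective_iff_li_comp b]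
      have : (fun j => (b.constr F g) (b j)) = g := funext fun j => b.constr_basis F g j
      rw [this])).symm)

/-- taking dualMap is a bijection on Hom spaces for f.d. vector spaces -/
lemma dualMap_equiv [FiniteDimensional F A] [FiniteDimensional F B] :
    Bijective (fun φ : A →ₗ[F] B => φ.dualMap) := by
  constructor
  · intro φ ψ h
    ext x
    have h1 : ∀ f : Module.Dual F B, f (φ x) = f (ψ x) := fun f => by
      have := congrFun (congrArg (fun g => (g f : A → F)) h) x
      exact this
    have : ∀ f : Module.Dual F B, f (φ x - ψ x) = 0 := fun f => by
      rw [map_sub, h1 f, sub_self]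
    have := (Module.forall_dual_apply_eq_zero_iff F (φ x - ψ x)).1 this
    exact sub_eq_zero.1 this
  · intro g
    refine ⟨(Module.evalEquiv F B).symm.toLinearMap ∘ₗ g.dualMap ∘ₗ
      (Module.evalEquiv F A).toLinearMap, ?_⟩
    ext f x
    simp only [LinearMap.dualMap_apply, LinearMap.coe_comp, comp_apply,
      LinearEquiv.coe_coe]
    rw [Module.apply_evalEquiv_symm_apply]
    simp

lemma card_surj_maps [Finite B] [FiniteDimensional F A] [FiniteDimensional F B] :
    Nat.card {φ : A →ₗ[F] B // Surjective φ} =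
      ∏ j ∈ Finset.range (finrank F B),
        (Fintype.card F ^ finrank F A - Fintype.card F ^ j) := by
  classical
  have hBd : Finite (Module.Dual F B) := by
    exact Finite.of_injective (fun f => (f : B → F)) DFunLike.coe_injective
  have hAd : Finite (Module.Dual F A) := by
    have : Finite A := Module.finite_of_finite F
    exact Finite.of_injective (fun f => (f : A → F)) DFunLike.coe_injective
  have e : {φ : A →ₗ[F] B // Surjective φ} ≃
      {g : Module.Dual F B →ₗ[F] Module.Dual F A // Injective g} :=
    (Equiv.subtypeEquiv (Equiv.ofBijective _ dualMap_equiv)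
      (fun φ => (LinearMap.dualMap_injective_iff).symm))
  rw [Nat.card_congr e]
  have bd : Basis (Fin (finrank F B)) F (Module.Dual F B) :=
    (Module.finBasis F (Module.Dual F B)).reindex
      (finCongr (Subspace.dual_finrank_eq))
  rw [card_inj_maps bd, Subspace.dual_finrank_eq]
end Maps

section Partition
variable {F : Type*} [Field F] [Fintype F]
variable {V : Type*} [AddCommGroup V] [Module F V] [Finite V]

lemma span_range_coe (W : Submodule F V) {k : ℕ} (g : Fin k → W) :
    span F (Set.range (fun j => (g j : V))) = Submodule.map W.subtype (span F (Set.range g)) := by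
  rw [Submodule.map_span]
  congr 1
  rw [← Set.range_comp]; rfl

def fiber_li_equiv {i : ℕ} (W : Submodule F V) (hW : finrank F W = i) :
    {x : {f : Fin i → V // LinearIndependent F f} // span F (Set.range x.1) = W} ≃
      {f : Fin i → W // LinearIndependent F f} where
  toFun x := ⟨fun j => ⟨x.1.1 j, (le_of_eq x.2) (subset_span ⟨j, rfl⟩)⟩,
    LinearIndependent.of_comp W.subtype x.1.2⟩
  invFun g := ⟨⟨fun j => (g.1 j : V), g.2.map' W.subtype (Submodule.ker_subtype W)⟩, by
    rw [span_range_coe]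
    have htop : span F (Set.range g.1) = ⊤ := by
      apply Submodule.eq_top_of_finrank_eq
      rw [finrank_span_eq_card g.2, Fintype.card_fin, hW]
    rw [htop, Submodule.map_subtype_top]⟩
  left_inv x := Subtype.ext (Subtype.ext rfl)
  right_inv g := Subtype.ext (funext fun j => Subtype.ext rfl)

instance : Finite (Submodule F V) :=
  Finite.of_injective (fun W => (W : Set V)) SetLike.coe_injective

lemma card_subspaces_identity (i : ℕ) :
    ∏ j ∈ Finset.range i, (Fintype.card F ^ finrank F V - Fintype.card F ^ j) =
      Nat.card {W : Submodule F V // finrank F W = i} *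
        ∏ j ∈ Finset.range i, (Fintype.card F ^ i - Fintype.card F ^ j) := by
  classical
  rw [← card_li_tuples (F := F) (V := V) i]
  rw [Nat.card_congr (Equiv.sigmaFiberEquiv
    (fun f : {f : Fin i → V // LinearIndependent F f} =>
      (⟨span F (Set.range f.1), by rw [finrank_span_eq_card f.2, Fintype.card_fin]⟩ :
        {W : Submodule F V // finrank F W = i}))).symm]
  rw [nat_card_sigma_const _ (∏ j ∈ Finset.range i,
      (Fintype.card F ^ i - Fintype.card F ^ j)) ?_]
  rintro ⟨W, hW⟩
  have e1 : {x : {f : Fin i → V // LinearIndependent F f} //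
      (⟨span F (Set.range x.1), by rw [finrank_span_eq_card x.2, Fintype.card_fin]⟩ :
        {W : Submodule F V // finrank F W = i}) = ⟨W, hW⟩} ≃
      {x : {f : Fin i → V // LinearIndependent F f} // span F (Set.range x.1) = W} :=
    Equiv.subtypeEquivRight (fun x => by rw [Subtype.ext_iff])
  have : Finite W := Subtype.finite
  rw [Nat.card_congr (e1.trans (fiber_li_equiv W hW)), card_li_tuples, hW]

lemma card_rank_tuples (m i : ℕ) :
    Nat.card {s : Fin m → V // finrank F (span F (Set.range s)) = i} =
      Nat.card {W : Submodule F V // finrank F W = i} *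
        ∏ j ∈ Finset.range i, (Fintype.card F ^ m - Fintype.card F ^ j) := by
  classical
  rw [Nat.card_congr (Equiv.sigmaFiberEquiv
    (fun s : {s : Fin m → V // finrank F (span F (Set.range s)) = i} =>
      (⟨span F (Set.range s.1), s.2⟩ : {W : Submodule F V // finrank F W = i}))).symm]
  rw [nat_card_sigma_const _ (∏ j ∈ Finset.range i,
      (Fintype.card F ^ m - Fintype.card F ^ j)) ?_]
  rintro ⟨W, hW⟩
  have e1 : {x : {s : Fin m → V // finrank F (span F (Set.range s)) = i} //
      (⟨span F (Set.range x.1), x.2⟩ : {W : Submodule F V // finrank F W = i}) = ⟨W, hW⟩} ≃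
      {x : {s : Fin m → V //
      finrank F (span F (Set.range s)) = i} // span F (Set.range x.1) = W} :=
    Equiv.subtypeEquivRight (fun x => by rw [Subtype.ext_iff])
  have : Finite W := Subtype.finite
  have e2 : {x : {s : Fin m → V // finrank F (span F (Set.range s)) = i} //
      span F (Set.range x.1) = W} ≃ {g : Fin m → W // span F (Set.range g) = ⊤} :=
    { toFun := fun x => ⟨fun j => ⟨x.1.1 j, (le_of_eq x.2) (subset_span ⟨j, rfl⟩)⟩, by
        apply Submodule.map_injective_of_injective (Submodule.injective_subtype W)
        rw [Submodule.map_subtype_top, ← span_range_coe]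
        exact x.2⟩
      invFun := fun g => ⟨⟨fun j => (g.1 j : V), by
        rw [span_range_coe, g.2, Submodule.map_subtype_top, hW]⟩, by
        rw [span_range_coe, g.2, Submodule.map_subtype_top]⟩
      left_inv := fun x => Subtype.ext (Subtype.ext rfl)
      right_inv := fun g => Subtype.ext (funext fun j => Subtype.ext rfl) }
  have e3 : {g : Fin m → W // span F (Set.range g) = ⊤} ≃
      {φ : (Fin m → F) →ₗ[F] W // Surjective φ} := by
    refine Equiv.subtypeEquiv ((Pi.basisFun F (Fin m)).constr F (M' := W)).toEquiv (fun g => ?_)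
    simp only [LinearEquiv.coe_toEquiv]
    rw [← LinearMap.range_eq_top]
    have : LinearMap.range ((Pi.basisFun F (Fin m)).constr F g) = span F (Set.range g) := by
      rw [LinearMap.range_eq_map, ← (Pi.basisFun F (Fin m)).span_eq, Submodule.map_span,
        ← Set.range_comp]
      congr 1
      exact congrArg _ (funext fun j => (Pi.basisFun F (Fin m)).constr_basis F g j)
    rw [this]
  rw [Nat.card_congr ((e1.trans e2).trans e3)]
  have : FiniteDimensional F W := by infer_instance
  rw [card_surj_maps, hW, Module.finrank_fin_fun]
end Partition

section Hamming
variable {q m n : ℕ} {F : Type} [Field F] [Fintype F] [DecidableEq F]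

lemma covering (hq : Fintype.card F = q)
    (H : Matrix (Fin m) (Fin n) F)
    (hcols : ∀ j, (fun i => H i j) ≠ 0)
    (hind : ∀ j₁ j₂, j₁ ≠ j₂ → ∀ c : F, (fun i => H i j₂) ≠ c • (fun i => H i j₁))
    (hn : n * (q - 1) = q ^ m - 1) :
    ∀ u : Fin m → F, u ≠ 0 → ∃ (j : Fin n) (c : F), c ≠ 0 ∧ (fun i => H i j) = c • u := by
  classical
  set Φ : Fin n × Fˣ → {u : Fin m → F // u ≠ 0} :=
    fun p => ⟨(p.2 : F) • (fun i => H i p.1),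
      smul_ne_zero p.2.ne_zero (hcols p.1)⟩ with hΦ
  have hinj : Function.Injective Φ := by
    rintro ⟨j₁, c₁⟩ ⟨j₂, c₂⟩ h
    have h' : (c₁ : F) • (fun i => H i j₁) = (c₂ : F) • (fun i => H i j₂) :=
      congrArg Subtype.val h
    by_cases hj : j₁ = j₂
    · subst hj
      have : ((c₁ : F) - (c₂ : F)) • (fun i => H i j₁) = 0 := by
        rw [sub_smul, h', sub_self]
      rcases smul_eq_zero.1 this with h0 | h0
      · exact Prod.ext rfl (Units.ext (sub_eq_zero.1 h0))
      · exact absurd h0 (hcols j₁)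
    · exfalso
      apply hind j₁ j₂ hj ((c₂ : F)⁻¹ * (c₁ : F))
      rw [mul_smul, h', inv_smul_smul₀ c₂.ne_zero]
  have hcard : Fintype.card (Fin n × Fˣ) = Fintype.card {u : Fin m → F // u ≠ 0} := by
    rw [Fintype.card_prod, Fintype.card_fin, Fintype.card_units, hq]
    have h2 : Fintype.card {u : Fin m → F // u = 0} = 1 := Fintype.card_subtype_eq 0
    have h3 : Fintype.card (Fin m → F) = q ^ m := by
      rw [Fintype.card_fun, hq, Fintype.card_fin]
    have h1 : Fintype.card {u : Fin m → F // u ≠ 0} =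
        Fintype.card (Fin m → F) - Fintype.card {u : Fin m → F // u = 0} :=
      Fintype.card_subtype_compl _
    rw [h1, h2, h3, hn]
  have hsurj : Function.Surjective Φ :=
    ((Fintype.bijective_iff_injective_and_card Φ).2 ⟨hinj, hcard⟩).2
  intro u hu
  obtain ⟨⟨j, c⟩, hjc⟩ := hsurj ⟨u, hu⟩
  refine ⟨j, (c : F)⁻¹, inv_ne_zero c.ne_zero, ?_⟩
  have : (c : F) • (fun i => H i j) = u := congrArg Subtype.val hjc
  rw [← this, inv_smul_smul₀ c.ne_zero]
end Hamming

section MinWeight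
variable {q m n : ℕ} {F K : Type} [Field F] [Fintype F] [DecidableEq F]
  [Field K] [Fintype K] [DecidableEq K] [Algebra F K]

/-- lower bound: any solution of `L w = s` has weight at least the rank of `s` -/
lemma weight_lower (H : Matrix (Fin m) (Fin n) F) (s : Fin m → K) (w : Fin n → K)
    (hw : (H.map (algebraMap F K)).mulVecLin w = s) :
    finrank F (span F (Set.range s)) ≤ hammingNorm w := by
  classical
  set T : Finset K := (Finset.univ.filter (fun j => w j ≠ 0)).image w with hT
  have hsub : span F (Set.range s) ≤ span F (T : Set K) := by
    rw [span_le]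
    rintro x ⟨c, rfl⟩
    have hsc : s c = ∑ j ∈ Finset.univ.filter (fun j => w j ≠ 0), H c j • w j := by
      rw [← hw]
      simp only [Matrix.mulVecLin_apply, Matrix.mulVec, dotProduct, Matrix.map_apply]
      rw [Finset.sum_filter_of_ne]
      · exact Finset.sum_congr rfl (fun j _ => (Algebra.smul_def (H c j) (w j)).symm)
      · intro j _ hne
        intro h0
        rw [h0, smul_zero] at hne
        exact hne rfl
    rw [hsc]
    apply Submodule.sum_mem
    intro j hj
    exact Submodule.smul_mem _ _ (subset_span (by
      rw [hT]; exact Finset.mem_coe.2 (Finset.mem_image_of_mem w hj)))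
  calc finrank F (span F (Set.range s)) ≤ finrank F (span F (T : Set K)) :=
        Submodule.finrank_mono hsub
    _ ≤ T.card := by
        have := finrank_span_finset_le_card (R := F) T
        exact this
    _ ≤ (Finset.univ.filter (fun j => w j ≠ 0)).card := Finset.card_image_le
    _ = hammingNorm w := rfl
end MinWeight

section MinWeight2
variable {q m n : ℕ} {F K : Type} [Field F] [Fintype F] [DecidableEq F]
  [Field K] [Fintype K] [DecidableEq K] [Algebra F K]

lemma weight_achieved (hq : Fintype.card F = q)
    (H : Matrix (Fin m) (Fin n) F)
    (hcols : ∀ j, (fun i => H i j) ≠ 0)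
    (hind : ∀ j₁ j₂, j₁ ≠ j₂ → ∀ c : F, (fun i => H i j₂) ≠ c • (fun i => H i j₁))
    (hn : n * (q - 1) = q ^ m - 1) (s : Fin m → K) :
    ∃ w : Fin n → K, (H.map (algebraMap F K)).mulVecLin w = s ∧
      hammingNorm w = finrank F (span F (Set.range s)) := by
  classical
  set t := finrank F (span F (Set.range s)) with ht
  set b : Basis (Fin t) F (span F (Set.range s)) := Module.finBasis F _ with hb
  set α : Fin t → K := fun j => (b j : K) with hα
  have αLI : LinearIndependent F α :=
    b.linearIndependent.map' (span F (Set.range s)).subtype (Submodule.ker_subtype _)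
  have αne : ∀ j, α j ≠ 0 := fun j => αLI.ne_zero j
  set β : Fin m → Fin t → F :=
    fun c j => b.repr ⟨s c, subset_span ⟨c, rfl⟩⟩ j with hβ
  have hs : ∀ c, s c = ∑ j, β c j • α j := by
    intro c
    have h1 : (⟨s c, subset_span ⟨c, rfl⟩⟩ : span F (Set.range s)) =
        ∑ j, β c j • b j := (b.sum_repr _).symm
    have h2 := congrArg (Submodule.subtype _) h1
    simp only [map_sum, map_smul] at h2
    exact h2
  -- dual coefficients
  have hγ : ∀ j0 : Fin t, ∃ γ : Fin m → F,
      ∀ j, ∑ c, γ c * β c j = if j = j0 then 1 else 0 := by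
    intro j0
    have hmem : α j0 ∈ span F (Set.range s) := (b j0).2
    obtain ⟨γ, hγ⟩ := (mem_span_range_iff_exists_fun F).1 hmem
    refine ⟨γ, ?_⟩
    have key : ∑ j, (∑ c, γ c * β c j) • α j = ∑ j, (if j = j0 then (1:F) else 0) • α j := by
      have lhs : ∑ j, (∑ c, γ c * β c j) • α j = α j0 := by
        rw [← hγ]
        have : ∀ c, γ c • s c = ∑ j, (γ c * β c j) • α j := by
          intro c
          rw [hs c, Finset.smul_sum]
          exact Finset.sum_congr rfl (fun j _ => by rw [smul_smul])
        rw [Finset.sum_congr rfl (fun c _ => this c), Finset.sum_comm]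
        exact Finset.sum_congr rfl (fun j _ => by rw [Finset.sum_smul])
      have rhs : ∑ j, (if j = j0 then (1:F) else 0) • α j = α j0 := by
        rw [Finset.sum_congr rfl (fun j _ => by
          rw [ite_smul, one_smul, zero_smul])]
        simp
      rw [lhs, rhs]
    have := Fintype.linearIndependent_iff.1 αLI
      (fun j => (∑ c, γ c * β c j) - (if j = j0 then 1 else 0)) (by
        rw [Finset.sum_congr rfl (fun j _ => sub_smul _ _ (α j)), Finset.sum_sub_distrib, key,
          sub_self])
    intro j
    have := this j
    exact sub_eq_zero.1 this
  -- the rows of β are linearly independent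
  set h : Fin t → (Fin m → F) := fun j c => β c j with hh
  have hLI : LinearIndependent F h := by
    rw [Fintype.linearIndependent_iff]
    intro lam hlam j0
    obtain ⟨γ, hγ0⟩ := hγ j0
    have hc : ∀ c, ∑ j, lam j * β c j = 0 := by
      intro c
      have := congrFun hlam c
      simpa using this
    have : lam j0 = ∑ j, lam j * (if j = j0 then 1 else 0) := by simp
    rw [this, Finset.sum_congr rfl (fun j _ => by rw [← hγ0 j])]
    calc ∑ j, lam j * ∑ c, γ c * β c j
        = ∑ j, ∑ c, γ c * (lam j * β c j) := by
          refine Finset.sum_congr rfl (fun j _ => ?_)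
          rw [Finset.mul_sum]
          exact Finset.sum_congr rfl (fun c _ => by ring)
      _ = ∑ c, γ c * ∑ j, lam j * β c j := by
          rw [Finset.sum_comm]
          exact Finset.sum_congr rfl (fun c _ => by rw [Finset.mul_sum])
      _ = 0 := by
          rw [Finset.sum_congr rfl (fun c _ => by rw [hc c, mul_zero]), Finset.sum_const_zero]
  have hne : ∀ j, h j ≠ 0 := fun j => hLI.ne_zero j
  -- choose columns of H representing each h j
  have hcov := covering hq H hcols hind hn
  choose σ cf hcf hcol using fun j => hcov (h j) (hne j)
  have σinj : Function.Injective σ := by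
    intro j1 j2 heq
    by_contra hne12
    have hcols_eq : cf j1 • h j1 = cf j2 • h j2 := by
      rw [← hcol j1, ← hcol j2, heq]
    have := linearIndependent_iff'.1 hLI {j1, j2}
      (fun j => if j = j1 then cf j1 else -(cf j2)) (by
        rw [Finset.sum_pair hne12]
        beta_reduce
        have e1 : (if j1 = j1 then cf j1 else -(cf j2)) = cf j1 := if_pos rfl
        have e2 : (if j2 = j1 then cf j1 else -(cf j2)) = -(cf j2) :=
          if_neg (fun h' => hne12 h'.symm)
        rw [e1, e2, neg_smul, ← sub_eq_add_neg, hcols_eq, sub_self]) j1 (by simp)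
    simp only [if_pos rfl] at this
    exact hcf j1 (by simpa using this)
  -- define the solution w
  set w : Fin n → K := fun p =>
    if hp : ∃ j, σ j = p then ((cf hp.choose)⁻¹ • α hp.choose) else 0 with hw
  have hw1 : ∀ j, w (σ j) = (cf j)⁻¹ • α j := by
    intro j
    have hp : ∃ j', σ j' = σ j := ⟨j, rfl⟩
    rw [hw]
    simp only [dif_pos hp]
    rw [σinj hp.choose_spec]
  have hw0 : ∀ p, (¬ ∃ j, σ j = p) → w p = 0 := by
    intro p hp
    rw [hw]; simp only [dif_neg hp]
  refine ⟨w, ?_, ?_⟩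
  · funext c0
    have expand : (H.map (algebraMap F K)).mulVecLin w c0 =
        ∑ p, algebraMap F K (H c0 p) * w p := by
      simp [Matrix.mulVecLin_apply, Matrix.mulVec, dotProduct, Matrix.map_apply]
    rw [expand]
    have hsum : ∑ p, algebraMap F K (H c0 p) * w p =
        ∑ p ∈ Finset.univ.image σ, algebraMap F K (H c0 p) * w p := by
      symm
      apply Finset.sum_subset (Finset.subset_univ _)
      intro p _ hp
      have : ¬ ∃ j, σ j = p := by
        rintro ⟨j, hj⟩
        exact hp (Finset.mem_image.2 ⟨j, Finset.mem_univ j, hj⟩)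
      rw [hw0 p this, mul_zero]
    rw [hsum, Finset.sum_image (fun j _ j' _ h => σinj h)]
    have term : ∀ j, algebraMap F K (H c0 (σ j)) * w (σ j) = β c0 j • α j := by
      intro j
      rw [hw1 j]
      have hH : H c0 (σ j) = cf j * β c0 j := by
        have := congrFun (hcol j) c0
        simpa [hh] using this
      rw [hH, Algebra.smul_def, Algebra.smul_def, ← mul_assoc, ← map_mul]
      congr 2
      rw [mul_comm (cf j) (β c0 j), mul_assoc, mul_inv_cancel₀ (hcf j), mul_one]
    rw [Finset.sum_congr rfl (fun j _ => term j), ← hs c0]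
  · have hfilter : Finset.univ.filter (fun p => w p ≠ 0) = Finset.univ.image σ := by
      ext p
      simp only [Finset.mem_filter, Finset.mem_univ, true_and, Finset.mem_image]
      constructor
      · intro hp
        by_contra hc
        have : ¬ ∃ j, σ j = p := by
          rintro ⟨j, hj⟩; exact hc ⟨j, hj⟩
        exact hp (hw0 p this)
      · rintro ⟨j, _, rfl⟩
        rw [hw1 j]
        exact smul_ne_zero (inv_ne_zero (hcf j)) (αne j)
    have : hammingNorm w = (Finset.univ.filter (fun p => w p ≠ 0)).card := rfl
    rw [this, hfilter, Finset.card_image_of_injective _ σinj, Finset.card_univ,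
      Fintype.card_fin]
end MinWeight2

section Assemble
variable {q m n : ℕ} {F K : Type} [Field F] [Fintype F] [DecidableEq F]
  [Field K] [Fintype K] [DecidableEq K] [Algebra F K]

lemma sInf_weight_eq (hq : Fintype.card F = q)
    (H : Matrix (Fin m) (Fin n) F)
    (hcols : ∀ j, (fun i => H i j) ≠ 0)
    (hind : ∀ j₁ j₂, j₁ ≠ j₂ → ∀ c : F, (fun i => H i j₂) ≠ c • (fun i => H i j₁))
    (hn : n * (q - 1) = q ^ m - 1) (s : Fin m → K) :
    sInf {d : ℕ | ∃ w : Fin n → K, (H.map (algebraMap F K)).mulVecLin w = s ∧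
        hammingNorm w = d} = finrank F (span F (Set.range s)) := by
  obtain ⟨w0, hw0, hn0⟩ := weight_achieved hq H hcols hind hn s
  have hmem : finrank F (span F (Set.range s)) ∈
      {d : ℕ | ∃ w : Fin n → K, (H.map (algebraMap F K)).mulVecLin w = s ∧
        hammingNorm w = d} := ⟨w0, hw0, hn0⟩
  apply le_antisymm
  · exact Nat.sInf_le hmem
  · obtain ⟨w1, hw1, hn1⟩ := Nat.sInf_mem (Set.nonempty_of_mem hmem)
    rw [← hn1]
    exact weight_lower H s w1 hw1

lemma L_surjective (hq : Fintype.card F = q)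
    (H : Matrix (Fin m) (Fin n) F)
    (hcols : ∀ j, (fun i => H i j) ≠ 0)
    (hind : ∀ j₁ j₂, j₁ ≠ j₂ → ∀ c : F, (fun i => H i j₂) ≠ c • (fun i => H i j₁))
    (hn : n * (q - 1) = q ^ m - 1) :
    Function.Surjective ((H.map (algebraMap F K)).mulVecLin) := by
  classical
  set L := (H.map (algebraMap F K)).mulVecLin with hL
  have hbasis : ∀ c : Fin m, ∃ x : Fin n → K, L x = Pi.single c (1 : K) := by
    intro c
    have hne : (Pi.single c (1 : F) : Fin m → F) ≠ 0 := by
      intro h0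
      have := congrFun h0 c
      rw [Pi.single_eq_same] at this
      exact one_ne_zero this
    obtain ⟨p, d, hd, hcolp⟩ := covering hq H hcols hind hn _ hne
    refine ⟨Pi.single p (algebraMap F K d⁻¹), ?_⟩
    funext c0
    rw [hL, Matrix.mulVecLin_apply, Matrix.mulVec_single]
    have hH : H c0 p = d * (Pi.single c (1 : F) : Fin m → F) c0 := by
      have := congrFun hcolp c0
      rw [Pi.smul_apply, smul_eq_mul] at this
      exact this
    show algebraMap F K (H c0 p) * algebraMap F K d⁻¹ = (Pi.single c (1 : K) : Fin m → K) c0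
    rw [hH, ← map_mul]
    by_cases hcc : c0 = c
    · subst hcc
      rw [Pi.single_eq_same, Pi.single_eq_same, mul_one, mul_inv_cancel₀ hd, map_one]
    · rw [Pi.single_eq_of_ne hcc, Pi.single_eq_of_ne hcc, mul_zero, zero_mul, map_zero]
      
  intro u
  choose x hx using hbasis
  refine ⟨∑ c, u c • x c, ?_⟩
  show L (∑ c, u c • x c) = u
  rw [map_sum]
  simp_rw [map_smul, hx]
  funext c0
  rw [Finset.sum_apply]
  have : ∀ c, (u c • (Pi.single c (1 : K) : Fin m → K)) c0 =
      (Pi.single c (u c) : Fin m → K) c0 := by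
    intro c
    by_cases hcc : c0 = c
    · subst hcc; simp
    · rw [Pi.smul_apply, Pi.single_eq_of_ne hcc, Pi.single_eq_of_ne hcc, smul_zero]
  rw [Finset.sum_congr rfl (fun c _ => this c)]
  have := congrFun (Finset.univ_sum_single u) c0
  rw [Finset.sum_apply] at this
  exact this
end Assemble



/-- The number `μ_i` of cosets of the lifted Hamming code `C_{(m,r)}`
consisting of vectors at distance `i` from the code equals `M_q(i,r)·M_q(i,m)/M_q(i,i)`. -/
theorem card_cosets_at_distance {q m r n : ℕ} (hm : 1 ≤ m) (hr : 1 ≤ r)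
    (F K : Type) [Field F] [Fintype F] [DecidableEq F]
    [Field K] [Fintype K] [DecidableEq K] [Algebra F K]
    (hq : Fintype.card F = q)
    (hrank : Module.finrank F K = r)
    (H : Matrix (Fin m) (Fin n) F)
    (hcols : ∀ j, (fun i => H i j) ≠ 0)
    (hind : ∀ j₁ j₂, j₁ ≠ j₂ → ∀ c : F, (fun i => H i j₂) ≠ c • (fun i => H i j₁))
    (hn : n * (q - 1) = q ^ m - 1)
    (i : ℕ) (hi : i ≤ min r m) :
    Nat.card {D : (Fin n → K) ⧸ LinearMap.ker ((H.map (algebraMap F K)).mulVecLin) //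
        ∀ v : Fin n → K, Submodule.Quotient.mk v = D →
          sInf {d : ℕ | ∃ c : Fin n → K,
            (H.map (algebraMap F K)).mulVec c = 0 ∧ hammingDist v c = d} = i} =
      (∏ j ∈ Finset.range i, (q ^ r - q ^ j)) *
        (∏ j ∈ Finset.range i, (q ^ m - q ^ j)) /
          (∏ j ∈ Finset.range i, (q ^ i - q ^ j)) := by
  classical
  set L := (H.map (algebraMap F K)).mulVecLin with hL
  have hset : ∀ v : Fin n → K,
      {d : ℕ | ∃ c : Fin n → K, (H.map (algebraMap F K)).mulVec c = 0 ∧ hammingDist v c = d} =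
      {d : ℕ | ∃ w : Fin n → K, L w = L v ∧ hammingNorm w = d} := by
    intro v
    ext d
    simp only [Set.mem_setOf_eq]
    constructor
    · rintro ⟨c, h0, hd⟩
      refine ⟨v - c, ?_, ?_⟩
      · rw [map_sub, show L c = 0 from h0, sub_zero]
      · rw [← hd, hammingDist_comm, hammingDist_eq_hammingNorm, neg_add_eq_sub]
    · rintro ⟨w, hw, hd⟩
      refine ⟨v - w, ?_, ?_⟩
      · show (H.map (algebraMap F K)).mulVec (v - w) = 0
        have h2 : L (v - w) = 0 := by rw [map_sub, hw, sub_self]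
        exact h2
      · rw [← hd, hammingDist_comm, hammingDist_eq_hammingNorm, neg_add_eq_sub, sub_sub_cancel]
  have hLsurj : Function.Surjective L := L_surjective hq H hcols hind hn
  set Lbar := Submodule.liftQ (LinearMap.ker L) L le_rfl with hLbar
  have hbar_mk : ∀ v, Lbar (Submodule.Quotient.mk v) = L v := fun v => rfl
  have hbar_inj : Function.Injective Lbar := by
    rw [← LinearMap.ker_eq_bot]
    exact Submodule.ker_liftQ_eq_bot _ _ _ le_rfl
  have hbar_surj : Function.Surjective Lbar := fun u => by
    obtain ⟨v, hv⟩ := hLsurj u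
    exact ⟨Submodule.Quotient.mk v, by rw [hbar_mk, hv]⟩
  have key : ∀ (D : (Fin n → K) ⧸ LinearMap.ker L) (v : Fin n → K),
      Submodule.Quotient.mk v = D →
      sInf {d : ℕ | ∃ c : Fin n → K,
          (H.map (algebraMap F K)).mulVec c = 0 ∧ hammingDist v c = d} =
        finrank F (span F (Set.range (Lbar D))) := by
    intro D v hv
    rw [hset v]
    have h3 : L v = Lbar D := by rw [← hv, hbar_mk]
    rw [h3]
    exact sInf_weight_eq hq H hcols hind hn (Lbar D)
  have hpred : ∀ D : (Fin n → K) ⧸ LinearMap.ker L,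
      (∀ v : Fin n → K, Submodule.Quotient.mk v = D →
        sInf {d : ℕ | ∃ c : Fin n → K,
          (H.map (algebraMap F K)).mulVec c = 0 ∧ hammingDist v c = d} = i) ↔
      finrank F (span F (Set.range (Lbar D))) = i := by
    intro D
    constructor
    · intro hD
      obtain ⟨v, hv⟩ := Submodule.Quotient.mk_surjective _ D
      rw [← key D v hv]
      exact hD v hv
    · intro hfr v hv
      rw [key D v hv, hfr]
  have e0 := Equiv.subtypeEquivRight hpred
  have e1 : {D : (Fin n → K) ⧸ LinearMap.ker L //
      finrank F (span F (Set.range (Lbar D))) = i} ≃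
      {s : Fin m → K // finrank F (span F (Set.range s)) = i} :=
    Equiv.subtypeEquiv (Equiv.ofBijective Lbar ⟨hbar_inj, hbar_surj⟩) (fun D => Iff.rfl)
  rw [Nat.card_congr (e0.trans e1)]
  rw [card_rank_tuples (F := F) (V := K) m i, hq]
  have hid := card_subspaces_identity (F := F) (V := K) i
  rw [hq, hrank] at hid
  rw [hid, mul_right_comm]
  have hq2 : 1 < q := hq ▸ Fintype.one_lt_card
  have hpos : 0 < ∏ j ∈ Finset.range i, (q ^ i - q ^ j) := by
    apply Finset.prod_pos
    intro j hj
    exact Nat.sub_pos_of_lt (Nat.pow_lt_pow_right hq2 (Finset.mem_range.1 hj))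
  rw [Nat.mul_div_cancel _ hpos]
end

section
/- Let C_r be an (r,q)-completely transitive code over F_{q^r}: its automorphism group Aut_{(r,q)}(C_r) — generated by monomial matrices over F_{q^r} preserving C_r, field automorphisms of F_{q^r} preserving C_r, and F_q-vector-space automorphisms of F_{q^r} applied coordinatewise preserving C_r — has exactly ρ+1 orbits on the cosets of C_r, where ρ is the covering radius. Then C_r is completely regular. -/
/-- Distance from a vector to a code (minimum Hamming distance to a codeword). -/
noncomputable def distToCode {n : ℕ} {K : Type*} [DecidableEq K] (C : Set (Fin n → K)) (v : Fin n → K) : ℕ :=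
  sInf {d : ℕ | ∃ c ∈ C, hammingDist v c = d}

/-- Covering radius of a code. -/
noncomputable def coveringRadius {n : ℕ} {K : Type*} [DecidableEq K] (C : Set (Fin n → K)) : ℕ :=
  sSup {d : ℕ | ∃ v : Fin n → K, distToCode C v = d}

/-- A code is completely regular. -/
def CompletelyRegular {n : ℕ} {K : Type*} [DecidableEq K] (C : Set (Fin n → K)) : Prop :=
  ∃ b c : ℕ → ℕ,
    (∀ (i : ℕ) (x : Fin n → K), distToCode C x = i →
      Nat.card {y : Fin n → K // hammingDist x y = 1 ∧ distToCode C y = i + 1} = b i) ∧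
    (∀ (i : ℕ), 1 ≤ i → ∀ x : Fin n → K, distToCode C x = i →
      Nat.card {y : Fin n → K // hammingDist x y = 1 ∧ distToCode C y = i - 1} = c i)

/-- `f` acts as a monomial matrix over `K`. -/
def IsMonomialMap {n : ℕ} {K : Type*} [Field K] (f : AddAut (Fin n → K)) : Prop :=
  ∃ (σ : Equiv.Perm (Fin n)) (d : Fin n → Kˣ), ∀ (x : Fin n → K) (j : Fin n),
    f x j = (d j : K) * x (σ j)

/-- `f` acts coordinatewise as a field automorphism of `K`. -/
def IsFieldAutMap {n : ℕ} {K : Type*} [Field K] (f : AddAut (Fin n → K)) : Prop :=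
  ∃ g : K ≃+* K, ∀ (x : Fin n → K) (j : Fin n), f x j = g (x j)

/-- `f` acts coordinatewise as an `F`-vector space automorphism of `K`. -/
def IsSemilinearMap (F : Type*) {n : ℕ} {K : Type*} [Field F] [Field K] [Algebra F K]
    (f : AddAut (Fin n → K)) : Prop :=
  ∃ g : K ≃ₗ[F] K, ∀ (x : Fin n → K) (j : Fin n), f x j = g (x j)

section CRAux
variable {n : ℕ} {K : Type*} [Field K] [DecidableEq K]

lemma CR_exists_nearest (C : Submodule K (Fin n → K)) (v : Fin n → K) :
    ∃ c ∈ C, hammingDist v c = distToCode (C : Set (Fin n → K)) v := by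
  have h : distToCode (C : Set (Fin n → K)) v ∈
      {d : ℕ | ∃ c ∈ (C : Set (Fin n → K)), hammingDist v c = d} :=
    Nat.sInf_mem ⟨hammingDist v 0, 0, C.zero_mem, rfl⟩
  exact h

lemma CR_distToCode_le (C : Submodule K (Fin n → K)) (v c : Fin n → K) (hc : c ∈ C) :
    distToCode (C : Set (Fin n → K)) v ≤ hammingDist v c :=
  Nat.sInf_le ⟨c, hc, rfl⟩

lemma CR_distToCode_le_add (C : Submodule K (Fin n → K)) (v w : Fin n → K) :
    distToCode (C : Set (Fin n → K)) v ≤ hammingDist v w + distToCode (C : Set (Fin n → K)) w := by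
  obtain ⟨c, hc, hd⟩ := CR_exists_nearest C w
  calc distToCode (C : Set (Fin n → K)) v ≤ hammingDist v c := CR_distToCode_le C v c hc
  _ ≤ hammingDist v w + hammingDist w c := hammingDist_triangle v w c
  _ = _ := by rw [hd]

lemma CR_distToCode_add_le (C : Submodule K (Fin n → K)) (v c : Fin n → K) (hc : c ∈ C) :
    distToCode (C : Set (Fin n → K)) (v + c) ≤ distToCode (C : Set (Fin n → K)) v := by
  obtain ⟨c', hc', hd⟩ := CR_exists_nearest C v
  have heq : hammingDist (v + c) (c' + c) = hammingDist v c' := by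
    rw [hammingDist_eq_hammingNorm, hammingDist_eq_hammingNorm]
    congr 1; abel
  calc distToCode (C : Set (Fin n → K)) (v + c) ≤ hammingDist (v + c) (c' + c) :=
        CR_distToCode_le C _ _ (C.add_mem hc' hc)
  _ = hammingDist v c' := heq
  _ = _ := hd

lemma CR_distToCode_add (C : Submodule K (Fin n → K)) (v c : Fin n → K) (hc : c ∈ C) :
    distToCode (C : Set (Fin n → K)) (v + c) = distToCode (C : Set (Fin n → K)) v := by
  refine le_antisymm (CR_distToCode_add_le C v c hc) ?_
  have := CR_distToCode_add_le C (v + c) (-c) (C.neg_mem hc)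
  simpa using this

lemma CR_distToCode_map_le (C : Submodule K (Fin n → K)) (f : AddAut (Fin n → K))
    (hC : ∀ x, f x ∈ C → x ∈ C) [Fintype K]
    (hwt : ∀ x, hammingNorm (f x) = hammingNorm x) (v : Fin n → K) :
    distToCode (C : Set (Fin n → K)) v ≤ distToCode (C : Set (Fin n → K)) (f v) := by
  obtain ⟨c, hc, hd⟩ := CR_exists_nearest C (f v)
  have h1 : f ((-f) c) ∈ C := by simpa using hc
  calc distToCode (C : Set (Fin n → K)) v ≤ hammingDist v ((-f) c) :=
        CR_distToCode_le C _ _ (hC _ h1)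
  _ = hammingNorm (f (v - (-f) c)) := by rw [hammingDist_comm, hammingDist_eq_hammingNorm, hwt, neg_add_eq_sub]
  _ = hammingDist (f v) c := by
        rw [map_sub, hammingDist_comm, hammingDist_eq_hammingNorm, neg_add_eq_sub]; simp
  _ = _ := hd

lemma CR_distToCode_map (C : Submodule K (Fin n → K)) (f : AddAut (Fin n → K))
    (hC : ∀ x, f x ∈ C ↔ x ∈ C) [Fintype K]
    (hwt : ∀ x, hammingNorm (f x) = hammingNorm x) (v : Fin n → K) :
    distToCode (C : Set (Fin n → K)) (f v) = distToCode (C : Set (Fin n → K)) v := by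
  refine le_antisymm ?_ (CR_distToCode_map_le C f (fun x h => (hC x).mp h) hwt v)
  have hC' : ∀ x, (-f) x ∈ C → x ∈ C := by
    intro x hx
    have := (hC _).mpr hx
    simpa using this
  have hwt' : ∀ x, hammingNorm ((-f) x) = hammingNorm x := by
    intro x
    rw [← hwt ((-f) x)]; simp
  have := CR_distToCode_map_le C (-f) hC' hwt' (f v)
  simpa using this

lemma CR_step (C : Submodule K (Fin n → K)) (v : Fin n → K) (m : ℕ)
    (hv : distToCode (C : Set (Fin n → K)) v = m + 1) :
    ∃ w : Fin n → K, distToCode (C : Set (Fin n → K)) w = m := by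
  obtain ⟨c, hc, hd⟩ := CR_exists_nearest C v
  rw [hv] at hd
  have hj : ∃ j, v j ≠ c j := by
    rw [← Function.ne_iff]
    intro h; rw [h, hammingDist_self] at hd; omega
  obtain ⟨j, hj⟩ := hj
  set w := Function.update v j (c j) with hwdef
  have hjmem : j ∈ Finset.univ.filter (fun i => v i ≠ c i) := by simp [hj]
  have hfil : Finset.univ.filter (fun i => w i ≠ c i)
      = (Finset.univ.filter (fun i => v i ≠ c i)).erase j := by
    ext i
    by_cases h : i = j
    · subst h; simp [w]
    · simp [w, Function.update_of_ne h, h]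
  have h1 : hammingDist w c = m := by
    have hcard := Finset.card_erase_of_mem hjmem
    simp only [hammingDist]
    rw [show ({i | w i ≠ c i} : Finset (Fin n)) = Finset.univ.filter (fun i => w i ≠ c i) from rfl,
      hfil, hcard]
    simp only [hammingDist] at hd
    rw [show ({i | v i ≠ c i} : Finset (Fin n)) = Finset.univ.filter (fun i => v i ≠ c i) from rfl] at hd
    omega
  have h2 : hammingDist v w ≤ 1 := by
    have hsub : Finset.univ.filter (fun i => v i ≠ w i) ⊆ {j} := by
      intro i hi
      simp only [Finset.mem_filter] at hi
      simp only [Finset.mem_singleton]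
      by_contra h
      exact hi.2 (by simp [w, Function.update_of_ne h])
    calc hammingDist v w ≤ ({j} : Finset (Fin n)).card := Finset.card_le_card hsub
    _ = 1 := Finset.card_singleton j
  refine ⟨w, le_antisymm ?_ ?_⟩
  · have := CR_distToCode_le C w c hc; omega
  · have := CR_distToCode_le_add C v w; omega

lemma CR_gen_wt [Fintype K] {F : Type*} [Field F] [Algebra F K] (f : AddAut (Fin n → K))
    (h : IsMonomialMap f ∨ IsFieldAutMap f ∨ IsSemilinearMap F f) (x : Fin n → K) :
    hammingNorm (f x) = hammingNorm x := by
  rcases h with ⟨σ, d, hfd⟩ | ⟨g, hg⟩ | ⟨g, hg⟩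
  · rw [show f x = fun j => (d j : K) * x (σ j) from funext (hfd x)]
    have h1 : (hammingNorm fun j => (d j : K) * x (σ j)) = hammingNorm (fun j => x (σ j)) :=
      hammingNorm_comp (fun j (c : K) => (d j : K) * c)
        (fun j => mul_right_injective₀ (d j).ne_zero) (fun j => mul_zero _)
    rw [h1]
    simp only [hammingNorm]
    exact Finset.card_equiv σ (fun i => by simp)
  · rw [show f x = fun j => g (x j) from funext (hg x)]
    exact hammingNorm_comp (fun _ c => g c) (fun _ => g.injective) (fun _ => map_zero g)
  · rw [show f x = fun j => g (x j) from funext (hg x)]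
    exact hammingNorm_comp (fun _ c => g c) (fun _ => g.injective) (fun _ => map_zero g)

end CRAux

/-- If the group `Aut_{(r,q)}(C_r)` — generated by the monomial maps,
coordinatewise field automorphisms and coordinatewise `F_q`-linear automorphisms
preserving the code — has exactly `ρ+1` orbits on the cosets of `C_r`, then `C_r` is
completely regular. -/
theorem rq_completely_transitive_implies_completely_regular {n r : ℕ} (hr : 1 ≤ r)
    (F K : Type) [Field F] [Fintype F] [DecidableEq F]
    [Field K] [Fintype K] [DecidableEq K] [Algebra F K]
    (hrank : Module.finrank F K = r)
    (C : Submodule K (Fin n → K))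
    (G : AddSubgroup (AddAut (Fin n → K)))
    (hG : G = AddSubgroup.closure {f : AddAut (Fin n → K) |
      (∀ x : Fin n → K, f x ∈ C ↔ x ∈ C) ∧
      (IsMonomialMap f ∨ IsFieldAutMap f ∨ IsSemilinearMap F f)})
    (rel : ((Fin n → K) ⧸ C) → ((Fin n → K) ⧸ C) → Prop)
    (hrel : ∀ D D', rel D D' ↔ ∃ f ∈ G, ∃ v : Fin n → K,
      Submodule.Quotient.mk v = D ∧ Submodule.Quotient.mk (f v) = D')
    (horbits : Nat.card (Quot rel) = coveringRadius (C : Set (Fin n → K)) + 1) :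
    CompletelyRegular (C : Set (Fin n → K)) := by
  classical
  -- every element of G preserves the code and the Hamming weight
  have hGood : ∀ f ∈ G, (∀ x : Fin n → K, f x ∈ C ↔ x ∈ C) ∧
      ∀ x : Fin n → K, hammingNorm (f x) = hammingNorm x := by
    rw [hG]
    intro f hf
    induction hf using AddSubgroup.closure_induction with
    | mem g hg => exact ⟨hg.1, CR_gen_wt g hg.2⟩
    | zero => exact ⟨fun x => by simp, fun x => by simp⟩
    | add g g' hg hg' ihg ihg' =>
      refine ⟨fun x => ?_, fun x => ?_⟩
      · rw [AddAut.mul_apply, ihg.1, ihg'.1]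
      · rw [AddAut.mul_apply, ihg.2, ihg'.2]
    | neg g hg ih =>
      refine ⟨fun x => ?_, fun x => ?_⟩
      · have := ih.1 ((-g) x)
        rw [show g ((-g) x) = x by simp] at this
        exact this.symm
      · have := ih.2 ((-g) x)
        rw [show g ((-g) x) = x by simp] at this
        exact this.symm
  -- distance to code only depends on the coset
  have hCoset : ∀ v w : Fin n → K, (Submodule.Quotient.mk v : (Fin n → K) ⧸ C) =
      Submodule.Quotient.mk w → distToCode (C : Set (Fin n → K)) v = distToCode (C : Set (Fin n → K)) w := by
    intro v w h
    have hc : v - w ∈ C := (Submodule.Quotient.eq C).mp h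
    have := CR_distToCode_add C w (v - w) hc
    rwa [show w + (v - w) = v by abel] at this
  -- choice of representatives
  choose rep hrep using fun D : (Fin n → K) ⧸ C => Submodule.Quotient.mk_surjective C D
  have hdq_mk : ∀ v : Fin n → K, distToCode (C : Set (Fin n → K)) (rep (Submodule.Quotient.mk v))
      = distToCode (C : Set (Fin n → K)) v := fun v => hCoset _ _ (hrep _)
  have hdq_rel : ∀ D D', rel D D' →
      distToCode (C : Set (Fin n → K)) (rep D) = distToCode (C : Set (Fin n → K)) (rep D') := by
    intro D D' h
    obtain ⟨f, hf, v, h1, h2⟩ := (hrel D D').mp h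
    rw [← h1, ← h2, hdq_mk, hdq_mk, CR_distToCode_map C f (hGood f hf).1 (hGood f hf).2]
  -- rel is an equivalence relation
  have heqv : Equivalence rel := by
    constructor
    · intro D
      exact (hrel D D).mpr ⟨0, zero_mem _, rep D, hrep D, by simpa using hrep D⟩
    · intro D D' h
      obtain ⟨f, hf, v, h1, h2⟩ := (hrel D D').mp h
      exact (hrel D' D).mpr ⟨-f, neg_mem hf, f v, h2, by simpa using h1⟩
    · intro D D' D'' hab hbc
      obtain ⟨f, hf, v, h1, h2⟩ := (hrel D D').mp hab
      obtain ⟨g, hg, w, h3, h4⟩ := (hrel D' D'').mp hbc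
      refine (hrel D D'').mpr ⟨g + f, add_mem hg hf, v, h1, ?_⟩
      rw [AddAut.mul_apply]
      have hwc : w - f v ∈ C := (Submodule.Quotient.eq C).mp (h3.trans h2.symm)
      have hmem : g (f v) - g w ∈ C := by
        rw [← map_sub]
        have : f v - w ∈ C := by simpa [neg_sub] using C.neg_mem hwc
        exact ((hGood g hg).1 _).mpr this
      exact ((Submodule.Quotient.eq C).mpr hmem).trans h4
  -- covering radius facts
  set ρ := coveringRadius (C : Set (Fin n → K)) with hρdef
  have hbdd : BddAbove {d : ℕ | ∃ v : Fin n → K, distToCode (C : Set (Fin n → K)) v = d} := by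
    refine ⟨n, ?_⟩
    rintro d ⟨v, rfl⟩
    calc distToCode (C : Set (Fin n → K)) v ≤ hammingDist v 0 := CR_distToCode_le C v 0 C.zero_mem
    _ ≤ Fintype.card (Fin n) := hammingDist_le_card_fintype
    _ = n := Fintype.card_fin n
  have hle : ∀ v : Fin n → K, distToCode (C : Set (Fin n → K)) v ≤ ρ :=
    fun v => le_csSup hbdd ⟨v, rfl⟩
  have hzero : distToCode (C : Set (Fin n → K)) (0 : Fin n → K) = 0 := by
    have := CR_distToCode_le C 0 0 C.zero_mem
    simpa using Nat.le_antisymm (by simpa using this) (Nat.zero_le _)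
  have hρmem : ∃ v : Fin n → K, distToCode (C : Set (Fin n → K)) v = ρ := by
    have hne : {d : ℕ | ∃ v : Fin n → K, distToCode (C : Set (Fin n → K)) v = d}.Nonempty :=
      ⟨0, ⟨0, hzero⟩⟩
    exact Nat.sSup_mem hne hbdd
  have hexists : ∀ i ≤ ρ, ∃ v : Fin n → K, distToCode (C : Set (Fin n → K)) v = i := by
    have hdesc : ∀ m : ℕ, (∃ v : Fin n → K, distToCode (C : Set (Fin n → K)) v = m) →
        ∀ i ≤ m, ∃ w : Fin n → K, distToCode (C : Set (Fin n → K)) w = i := by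
      intro m
      induction m with
      | zero =>
        intro hv i hi
        have : i = 0 := by omega
        subst this; exact hv
      | succ m ih =>
        rintro ⟨v, hv⟩ i hi
        rcases Nat.eq_or_lt_of_le hi with h | h
        · exact ⟨v, by omega⟩
        · exact ih (CR_step C v m hv) i (by omega)
    intro i hi; exact hdesc ρ hρmem i hi
  -- Quot rel is finite with ρ+1 elements; distance gives a bijection to Fin (ρ+1)
  have hfin : Finite (Quot rel) := by
    have hpos : 0 < Nat.card (Quot rel) := by rw [horbits]; omega
    exact (Nat.card_pos_iff.mp hpos).2
  have hqout : ∀ D : (Fin n → K) ⧸ C, rel (Quot.out (Quot.mk rel D)) D :=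
    fun D => heqv.eqvGen_iff.mp (Quot.eqvGen_exact (Quot.out_eq (Quot.mk rel D)))
  set φ : Quot rel → Fin (ρ + 1) := fun Q =>
    ⟨distToCode (C : Set (Fin n → K)) (rep (Quot.out Q)), by
      have := hle (rep (Quot.out Q)); omega⟩ with hφdef
  have hφmk : ∀ v : Fin n → K,
      (φ (Quot.mk rel (Submodule.Quotient.mk v)) : ℕ) = distToCode (C : Set (Fin n → K)) v := by
    intro v
    have h := hdq_rel _ _ (hqout (Submodule.Quotient.mk v))
    simp only [hφdef]
    rw [h, hdq_mk]
  have hφsurj : Function.Surjective φ := by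
    rintro ⟨i, hi⟩
    obtain ⟨v, hv⟩ := hexists i (by omega)
    refine ⟨Quot.mk rel (Submodule.Quotient.mk v), ?_⟩
    apply Fin.ext
    rw [hφmk v, hv]
  have hφinj : Function.Injective φ :=
    ((Nat.bijective_iff_surjective_and_card φ).mpr
      ⟨hφsurj, by rw [horbits, Nat.card_eq_fintype_card, Fintype.card_fin]⟩).1
  -- equal distance implies same orbit
  have hkey : ∀ x x' : Fin n → K,
      distToCode (C : Set (Fin n → K)) x = distToCode (C : Set (Fin n → K)) x' →
      rel (Submodule.Quotient.mk x) (Submodule.Quotient.mk x') := by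
    intro x x' h
    have h1 : φ (Quot.mk rel (Submodule.Quotient.mk x)) = φ (Quot.mk rel (Submodule.Quotient.mk x')) := by
      apply Fin.ext; rw [hφmk, hφmk, h]
    exact heqv.eqvGen_iff.mp (Quot.eqvGen_exact (hφinj h1))
  -- the counting invariance
  have hcount : ∀ x x' : Fin n → K,
      distToCode (C : Set (Fin n → K)) x = distToCode (C : Set (Fin n → K)) x' → ∀ j : ℕ,
      Nat.card {y : Fin n → K // hammingDist x y = 1 ∧ distToCode (C : Set (Fin n → K)) y = j}
        = Nat.card {y : Fin n → K // hammingDist x' y = 1 ∧ distToCode (C : Set (Fin n → K)) y = j} := by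
    intro x x' h j
    obtain ⟨f, hf, v, h1, h2⟩ := (hrel _ _).mp (hkey x x' h)
    have hc₁ : v - x ∈ C := (Submodule.Quotient.eq C).mp h1
    have hc₂ : x' - f v ∈ C := by simpa [neg_sub] using C.neg_mem ((Submodule.Quotient.eq C).mp h2)
    set e : (Fin n → K) ≃ (Fin n → K) :=
      (Equiv.addRight (v - x)).trans
        ((f : (Fin n → K) ≃+ (Fin n → K)).toEquiv.trans (Equiv.addRight (x' - f v))) with hedef
    have heval : ∀ y, e y = f (y + (v - x)) + (x' - f v) := fun y => rfl
    have hdist : ∀ y, hammingDist x' (e y) = hammingDist x y := by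
      intro y
      rw [heval, hammingDist_comm, hammingDist_comm x, hammingDist_eq_hammingNorm, hammingDist_eq_hammingNorm,
        neg_add_eq_sub, neg_add_eq_sub]
      rw [show x' - (f (y + (v - x)) + (x' - f v)) = f v - f (y + (v - x)) by abel,
        ← map_sub, show v - (y + (v - x)) = x - y by abel, (hGood f hf).2]
    have hd2 : ∀ y, distToCode (C : Set (Fin n → K)) (e y) = distToCode (C : Set (Fin n → K)) y := by
      intro y
      rw [heval, CR_distToCode_add C _ _ hc₂,
        CR_distToCode_map C f (hGood f hf).1 (hGood f hf).2,
        CR_distToCode_add C y (v - x) hc₁]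
    exact Nat.card_congr (Equiv.subtypeEquiv e (fun y => by rw [hdist y, hd2 y]))
  -- conclude
  refine ⟨fun i => if h : ∃ x : Fin n → K, distToCode (C : Set (Fin n → K)) x = i then
      Nat.card {y : Fin n → K // hammingDist h.choose y = 1 ∧
        distToCode (C : Set (Fin n → K)) y = i + 1} else 0,
    fun i => if h : ∃ x : Fin n → K, distToCode (C : Set (Fin n → K)) x = i then
      Nat.card {y : Fin n → K // hammingDist h.choose y = 1 ∧
        distToCode (C : Set (Fin n → K)) y = i - 1} else 0, ?_, ?_⟩
  · intro i x hx
    beta_reduce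
    rw [dif_pos ⟨x, hx⟩]
    exact hcount x _ (hx.trans (Exists.choose_spec (⟨x, hx⟩ : ∃ x : Fin n → K,
      distToCode (C : Set (Fin n → K)) x = i)).symm) (i + 1)
  · intro i _ x hx
    beta_reduce
    rw [dif_pos ⟨x, hx⟩]
    exact hcount x _ (hx.trans (Exists.choose_spec (⟨x, hx⟩ : ∃ x : Fin n → K,
      distToCode (C : Set (Fin n → K)) x = i)).symm) (i - 1)
end

section
/- The lifted Hamming code C_{(m,r)} over F_{q^r} is (r,q)-completely transitive: for any two vectors v, w ∈ F_{q^r}^n at the same distance from C_{(m,r)}, there exists an automorphism φ ∈ Aut_{(r,q)}(C_{(m,r)}) such that w and φ(v) lie in the same coset of C_{(m,r)}. -/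
theorem exists_linearEquiv_map_eq (F : Type*) {V : Type*} [Field F] [AddCommGroup V] [Module F V]
    [FiniteDimensional F V] {ι : Type*} [Fintype ι] {b b' : ι → V}
    (hb : LinearIndependent F b) (hb' : LinearIndependent F b') :
    ∃ g : V ≃ₗ[F] V, ∀ k, g (b k) = b' k := by
  let W := Submodule.span F (Set.range b)
  let W' := Submodule.span F (Set.range b')
  obtain ⟨U, hU⟩ := W.exists_isCompl
  obtain ⟨U', hU'⟩ := W'.exists_isCompl
  have hWW' : Module.finrank F W = Module.finrank F W' := by
    rw [finrank_span_eq_card hb, finrank_span_eq_card hb']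
  have hUU' : Module.finrank F U = Module.finrank F U' := by
    have h1 := Submodule.finrank_add_eq_of_isCompl hU
    have h2 := Submodule.finrank_add_eq_of_isCompl hU'
    omega
  obtain ⟨eU⟩ := FiniteDimensional.nonempty_linearEquiv_of_finrank_eq hUU'
  let e : W ≃ₗ[F] W' := (Module.Basis.span hb).equiv (Module.Basis.span hb') (Equiv.refl ι)
  let g : V ≃ₗ[F] V := (Submodule.prodEquivOfIsCompl W U hU).symm ≪≫ₗ
    (e.prodCongr eU) ≪≫ₗ (Submodule.prodEquivOfIsCompl W' U' hU')
  refine ⟨g, fun k => ?_⟩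
  have h1 : (Submodule.prodEquivOfIsCompl W U hU).symm (b k) = (Module.Basis.span hb k, 0) := by
    apply (Submodule.prodEquivOfIsCompl W U hU).injective
    rw [LinearEquiv.apply_symm_apply]
    simp [Submodule.coe_prodEquivOfIsCompl', Module.Basis.span_apply]
  simp [g, h1, Submodule.coe_prodEquivOfIsCompl', e, Module.Basis.equiv_apply]
  have h2 := Module.Basis.equiv_apply (b := Module.Basis.span hb) (b' := Module.Basis.span hb')
    (e := Equiv.refl ι) (i := k)
  rw [Module.Basis.span_apply, Equiv.refl_apply, Module.Basis.span_apply] at h2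
  rw [h2]


theorem col_inj {m n : ℕ} {F : Type*} [Field F]
    (H : Matrix (Fin m) (Fin n) F)
    (hcols : ∀ j, (fun i => H i j) ≠ 0)
    (hind : ∀ j₁ j₂, j₁ ≠ j₂ → ∀ c : F, (fun i => H i j₂) ≠ c • (fun i => H i j₁))
    (j j' : Fin n) (c c' : Fˣ)
    (h : (c : F) • (fun i => H i j) = (c' : F) • (fun i => H i j')) :
    j = j' ∧ c = c' := by
  by_cases hjj : j = j'
  · subst hjj
    refine ⟨rfl, ?_⟩
    obtain ⟨i, hi⟩ := Function.ne_iff.mp (hcols j)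
    have := congrFun h i
    simp only [Pi.smul_apply, smul_eq_mul] at this
    have hcc : (c : F) = (c' : F) := mul_right_cancel₀ (by simpa using hi) this
    exact Units.ext hcc
  · exfalso
    apply hind j j' hjj ((c'⁻¹ : Fˣ) * c)
    have : (fun i => H i j') = ((c'⁻¹ : Fˣ) : F) • ((c : F) • (fun i => H i j)) := by
      rw [h, smul_smul]
      simp
    rw [this, smul_smul]


theorem col_surj {q m n : ℕ} {F : Type*} [Field F] [Fintype F] [DecidableEq F]
    (hq : Fintype.card F = q)
    (H : Matrix (Fin m) (Fin n) F)
    (hcols : ∀ j, (fun i => H i j) ≠ 0)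
    (hind : ∀ j₁ j₂, j₁ ≠ j₂ → ∀ c : F, (fun i => H i j₂) ≠ c • (fun i => H i j₁))
    (hn : n * (q - 1) = q ^ m - 1)
    (y : Fin m → F) (hy : y ≠ 0) :
    ∃ p : Fin n × Fˣ, (p.2 : F) • (fun i => H i p.1) = y := by
  classical
  have hq2 : 2 ≤ q := by
    rw [← hq]; exact Fintype.one_lt_card
  let e : Fin n × Fˣ → {y : Fin m → F // y ≠ 0} := fun p =>
    ⟨(p.2 : F) • (fun i => H i p.1), by
      intro h0
      apply hcols p.1
      have := congrArg (fun z => ((p.2⁻¹ : Fˣ) : F) • z) h0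
      simpa [smul_smul] using this⟩
  have hinj : Function.Injective e := by
    rintro ⟨j, c⟩ ⟨j', c'⟩ hpp
    have h : (c : F) • (fun i => H i j) = (c' : F) • (fun i => H i j') :=
      congrArg Subtype.val hpp
    obtain ⟨h1, h2⟩ := col_inj H hcols hind j j' c c' h
    simp [h1, h2]
  have hcard : Fintype.card (Fin n × Fˣ) = Fintype.card {y : Fin m → F // y ≠ 0} := by
    rw [Fintype.card_prod, Fintype.card_fin, Fintype.card_units, hq]
    have : Fintype.card {y : Fin m → F // y ≠ 0} =
        Fintype.card (Fin m → F) - 1 := by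
      have := Fintype.card_subtype_compl (fun y : Fin m → F => y = 0)
      simpa [Fintype.card_subtype_eq (0 : Fin m → F)] using this
    rw [this, Fintype.card_fun, Fintype.card_fin, hq, hn]
  have hbij : Function.Bijective e :=
    (Fintype.bijective_iff_injective_and_card e).mpr ⟨hinj, hcard⟩
  obtain ⟨p, hp⟩ := hbij.2 ⟨y, hy⟩
  exact ⟨p, congrArg Subtype.val hp⟩


theorem rank_le_dist {m n : ℕ} {F K : Type*} [Field F]
    [Field K] [Fintype K] [DecidableEq K] [Algebra F K]
    (H : Matrix (Fin m) (Fin n) F) (v c : Fin n → K)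
    (hc : (H.map (algebraMap F K)).mulVec c = 0) :
    Module.finrank F (Submodule.span F (Set.range ((H.map (algebraMap F K)).mulVec v)))
      ≤ hammingDist v c := by
  classical
  set HK := H.map (algebraMap F K) with hHK
  set u : Fin n → K := v - c with hu
  have hs : HK.mulVec v = HK.mulVec u := by
    rw [hu, Matrix.mulVec_sub, hc, sub_zero]
  let T : Finset (Fin n) := {j | u j ≠ 0}
  have hdist : hammingDist v c = T.card := by
    unfold hammingDist
    congr 1
    ext j
    simp [T, hu, sub_ne_zero]
  rw [hdist, hs]
  have hspan : Submodule.span F (Set.range (HK.mulVec u)) ≤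
      Submodule.span F (↑(T.image u) : Set K) := by
    rw [Submodule.span_le]
    rintro _ ⟨i, rfl⟩
    have : HK.mulVec u i = ∑ j, (H i j) • (u j) := by
      simp [Matrix.mulVec, dotProduct, hHK, Matrix.map_apply, Algebra.smul_def]
    rw [this]
    apply Submodule.sum_mem
    intro j _
    by_cases hj : u j = 0
    · simp [hj]
    · exact Submodule.smul_mem _ _ (Submodule.subset_span (by
        simp only [Finset.coe_image, Set.mem_image, Finset.mem_coe]
        exact ⟨j, by simp [T, hj], rfl⟩))
  calc Module.finrank F (Submodule.span F (Set.range (HK.mulVec u)))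
      ≤ Module.finrank F (Submodule.span F (↑(T.image u) : Set K)) :=
        Submodule.finrank_mono hspan
    _ ≤ (T.image u).card := finrank_span_finset_le_card _
    _ ≤ T.card := Finset.card_image_le


theorem exists_close_codeword {m n : ℕ} {F K : Type*} [Field F] [DecidableEq F]
    [Field K] [Fintype K] [DecidableEq K] [Algebra F K]
    (H : Matrix (Fin m) (Fin n) F)
    (pg : ∀ y : Fin m → F, y ≠ 0 → ∃ p : Fin n × Fˣ, (p.2 : F) • (fun i => H i p.1) = y)
    (j0 : Fin n) (v : Fin n → K) :
    ∃ c : Fin n → K, (H.map (algebraMap F K)).mulVec c = 0 ∧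
      hammingDist v c ≤
        Module.finrank F (Submodule.span F (Set.range ((H.map (algebraMap F K)).mulVec v))) := by
  classical
  set HK := H.map (algebraMap F K) with hHK
  set s : Fin m → K := HK.mulVec v with hsdef
  set W := Submodule.span F (Set.range s) with hW
  set t := Module.finrank F W with ht
  let bW : Module.Basis (Fin t) F W := Module.finBasis F W
  let A : Fin m → Fin t → F := fun i k => bW.repr ⟨s i, Submodule.subset_span ⟨i, rfl⟩⟩ k
  have hsrep : ∀ i, s i = ∑ k, A i k • (bW k : K) := by
    intro i
    have := bW.sum_repr ⟨s i, Submodule.subset_span ⟨i, rfl⟩⟩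
    have h2 : ((∑ k, bW.repr ⟨s i, Submodule.subset_span ⟨i, rfl⟩⟩ k • bW k : W) : K) = s i :=
      congrArg Subtype.val this
    rw [← h2]
    push_cast
    rfl
  have hrep : ∀ k : Fin t, ∃ p : Fin n × F,
      p.2 • (fun i => H i p.1) = fun i => A i k := by
    intro k
    by_cases h0 : (fun i => A i k) = 0
    · exact ⟨(j0, 0), by rw [zero_smul]; exact h0.symm⟩
    · obtain ⟨p, hp⟩ := pg _ h0
      exact ⟨(p.1, (p.2 : F)), hp⟩
  choose P hP using hrep
  let J : Fin t → Fin n := fun k => (P k).1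
  let cc : Fin t → F := fun k => (P k).2
  let u : Fin n → K := fun j => ∑ k, if J k = j then algebraMap F K (cc k) * (bW k : K) else 0
  have hAc : ∀ k i, cc k * H i (J k) = A i k := by
    intro k i
    have := congrFun (hP k) i
    simpa [cc, J] using this
  have hu : HK.mulVec u = s := by
    funext i
    have : HK.mulVec u i = ∑ j, algebraMap F K (H i j) * u j := by
      simp [Matrix.mulVec, dotProduct, hHK, Matrix.map_apply]
    rw [this]
    simp only [u, Finset.mul_sum, mul_ite, mul_zero]
    rw [Finset.sum_comm]
    have : ∀ k : Fin t, (∑ j, if J k = j then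
        algebraMap F K (H i j) * (algebraMap F K (cc k) * (bW k : K)) else 0)
        = A i k • (bW k : K) := by
      intro k
      rw [Finset.sum_ite_eq (Finset.univ) (J k)
        (fun j => algebraMap F K (H i j) * (algebraMap F K (cc k) * (bW k : K)))]
      simp only [Finset.mem_univ, if_true]
      rw [← mul_assoc, ← map_mul, Algebra.smul_def, mul_comm (H i (J k)) (cc k), hAc]
    rw [Finset.sum_congr rfl fun k _ => this k]
    exact (hsrep i).symm
  refine ⟨v - u, ?_, ?_⟩
  · rw [Matrix.mulVec_sub, hu, ← hsdef, sub_self]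
  · have hdist : hammingDist v (v - u) = ({j | u j ≠ 0} : Finset (Fin n)).card := by
      unfold hammingDist
      congr 1
      ext j
      simp only [Finset.mem_filter, Finset.mem_univ, true_and, Pi.sub_apply, ne_eq]
      constructor
      · intro h h0; exact h (by rw [h0, sub_zero])
      · intro h h0; apply h; rwa [eq_comm, sub_eq_self] at h0
    rw [hdist]
    have hsub : ({j | u j ≠ 0} : Finset (Fin n)) ⊆ Finset.univ.image J := by
      intro j hj
      simp only [Finset.mem_filter, Finset.mem_univ, true_and] at hj
      by_contra hjim
      apply hj
      simp only [Finset.mem_image, Finset.mem_univ, true_and] at hjim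
      push_neg at hjim
      simp only [u]
      apply Finset.sum_eq_zero
      intro k _
      rw [if_neg (hjim k)]
    calc ({j | u j ≠ 0} : Finset (Fin n)).card ≤ (Finset.univ.image J).card :=
          Finset.card_le_card hsub
      _ ≤ (Finset.univ : Finset (Fin t)).card := Finset.card_image_le
      _ = t := by simp


theorem coeff_indep {m : ℕ} {F K : Type*} [Field F] [AddCommGroup K] [Module F K]
    (s : Fin m → K) {t : ℕ}
    (bW : Module.Basis (Fin t) F (Submodule.span F (Set.range s))) :
    LinearIndependent F (fun k => (fun i =>
      bW.repr ⟨s i, Submodule.subset_span ⟨i, rfl⟩⟩ k : Fin m → F)) := by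
  classical
  set sv : Fin m → (Submodule.span F (Set.range s)) := fun i => ⟨s i, Submodule.subset_span ⟨i, rfl⟩⟩ with hsv
  have hrep : ∀ k, ∃ P : Fin m → F, ∑ i, P i • s i = (bW k : K) := by
    intro k
    exact (Submodule.mem_span_range_iff_exists_fun F).mp (bW k).2
  choose P hP using hrep
  have hPW : ∀ k, ∑ i, P k i • sv i = bW k := by
    intro k
    apply Subtype.ext
    push_cast
    exact hP k
  have hδ : ∀ k l, ∑ i, P k i * (bW.repr (sv i) l) = if k = l then 1 else 0 := by
    intro k l
    have h1 := congrArg (fun z => bW.repr z l) (hPW k)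
    simp only [map_sum, map_smul, Finsupp.coe_finset_sum, Finsupp.coe_smul,
      Finset.sum_apply, Pi.smul_apply, smul_eq_mul, Module.Basis.repr_self,
      Finsupp.single_apply] at h1
    exact h1
  rw [Fintype.linearIndependent_iff]
  intro d hd k0
  have hzero : ∀ i, ∑ k, d k * bW.repr (sv i) k = 0 := by
    intro i
    have h := congrFun hd i
    simp only [Finset.sum_apply, Pi.smul_apply, smul_eq_mul, Pi.zero_apply] at h
    exact h
  have : (0 : F) = d k0 := by
    calc (0 : F) = ∑ i, P k0 i * ∑ k, d k * bW.repr (sv i) k := by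
          simp [hzero]
      _ = ∑ k, d k * ∑ i, P k0 i * bW.repr (sv i) k := by
          simp_rw [Finset.mul_sum]
          rw [Finset.sum_comm]
          congr 1; ext i; congr 1; ext k; ring
      _ = ∑ k, d k * (if k0 = k then 1 else 0) := by
          simp_rw [hδ]
      _ = d k0 := by simp
  exact this.symm

theorem exists_semilinear {m n : ℕ} {F K : Type*} [Field F]
    [Field K] [Algebra F K]
    (H : Matrix (Fin m) (Fin n) F) (g : K ≃ₗ[F] K) :
    ∃ f : AddAut (Fin n → K), IsSemilinearMap F f ∧
      ∀ x, (H.map (algebraMap F K)).mulVec (f x) =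
        fun i => g ((H.map (algebraMap F K)).mulVec x i) := by
  classical
  let f : AddAut (Fin n → K) :=
    { toFun := fun x => fun j => g (x j)
      invFun := fun y => fun j => g.symm (y j)
      left_inv := fun x => by funext j; simp
      right_inv := fun y => by funext j; simp
      map_add' := fun x y => by funext j; simp }
  refine ⟨f, ⟨g, fun x j => rfl⟩, fun x => ?_⟩
  funext i
  show ∑ j, (algebraMap F K) (H i j) * g (x j) = g (∑ j, (algebraMap F K) (H i j) * x j)
  rw [map_sum]
  congr 1
  funext j
  rw [← Algebra.smul_def, ← Algebra.smul_def, map_smul]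

theorem exists_monomial {m n : ℕ} {F K : Type*} [Field F] [DecidableEq F]
    [Field K] [Algebra F K]
    (H : Matrix (Fin m) (Fin n) F)
    (hcols : ∀ j, (fun i => H i j) ≠ 0)
    (hind : ∀ j₁ j₂, j₁ ≠ j₂ → ∀ c : F, (fun i => H i j₂) ≠ c • (fun i => H i j₁))
    (pg : ∀ y : Fin m → F, y ≠ 0 → ∃ p : Fin n × Fˣ, (p.2 : F) • (fun i => H i p.1) = y)
    (B B' : Matrix (Fin m) (Fin m) F) (hB : B' * B = 1) :
    ∃ f : AddAut (Fin n → K), IsMonomialMap f ∧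
      ∀ x, (H.map (algebraMap F K)).mulVec (f x) =
        (B.map (algebraMap F K)).mulVec ((H.map (algebraMap F K)).mulVec x) := by
  classical
  have hBleft : ∀ y : Fin m → F, B'.mulVec (B.mulVec y) = y := by
    intro y; rw [Matrix.mulVec_mulVec, hB, Matrix.one_mulVec]
  have hy : ∀ j, (B.mulVec (fun i => H i j)) ≠ 0 := by
    intro j h0
    apply hcols j
    have h1 := hBleft (fun i => H i j)
    rw [h0, Matrix.mulVec_zero] at h1
    exact h1.symm
  have hchoice : ∀ j, ∃ p : Fin n × Fˣ,
      (p.2 : F) • (fun i => H i p.1) = B.mulVec (fun i => H i j) :=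
    fun j => pg _ (hy j)
  choose P hP using hchoice
  set τ : Fin n → Fin n := fun j => (P j).1 with hτ
  set c : Fin n → Fˣ := fun j => (P j).2 with hc
  have hPj : ∀ j, ((c j : F) • fun i => H i (τ j)) = B.mulVec (fun i => H i j) :=
    fun j => hP j
  have hcol : ∀ j, (fun i => H i j) = ((c j : F)) • B'.mulVec (fun i => H i (τ j)) := by
    intro j
    rw [← Matrix.mulVec_smul, hPj, hBleft]
  have hτinj : Function.Injective τ := by
    intro j1 j2 hj
    by_contra hne
    apply hind j1 j2 hne ((c j2 : F) * ((c j1)⁻¹ : Fˣ))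
    rw [hcol j2, hcol j1, ← hj, smul_smul]
    congr 1
    field_simp
    exact (Units.inv_mul _).symm
  have hτbij : Function.Bijective τ := Finite.injective_iff_bijective.mp hτinj
  let π : Equiv.Perm (Fin n) := Equiv.ofBijective τ hτbij
  have hπ : ∀ j, π j = τ j := fun j => rfl
  let f : AddAut (Fin n → K) :=
    { toFun := fun x => fun j' => algebraMap F K (c (π.symm j') : F) * x (π.symm j')
      invFun := fun y => fun j => (algebraMap F K (((c j)⁻¹ : Fˣ) : F)) * y (π j)
      left_inv := fun x => by
        funext j
        show (algebraMap F K) (((c j)⁻¹ : Fˣ) : F) *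
          ((algebraMap F K) ((c (π.symm (π j))) : F) * x (π.symm (π j))) = x j
        rw [Equiv.symm_apply_apply, ← mul_assoc, ← map_mul]
        simp
      right_inv := fun y => by
        funext j'
        show (algebraMap F K) ((c (π.symm j')) : F) *
          ((algebraMap F K) (((c (π.symm j'))⁻¹ : Fˣ) : F) * y (π (π.symm j'))) = y j'
        rw [Equiv.apply_symm_apply, ← mul_assoc, ← map_mul]
        simp
      map_add' := fun x y => by funext j; simp [mul_add] }
  refine ⟨f, ⟨π.symm, fun j' => Units.map (algebraMap F K).toMonoidHom (c (π.symm j')),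
      fun x j' => rfl⟩, ?_⟩
  intro x
  funext i
  show ∑ j', (algebraMap F K) (H i j') * (algebraMap F K (c (π.symm j') : F) * x (π.symm j'))
    = ∑ l, (algebraMap F K) (B i l) * ∑ j, (algebraMap F K) (H l j) * x j
  rw [← Equiv.sum_comp π (fun j' => (algebraMap F K) (H i j') *
      (algebraMap F K (c (π.symm j') : F) * x (π.symm j')))]
  have hLHS : ∀ j, (algebraMap F K) (H i (π j)) *
      (algebraMap F K (c (π.symm (π j)) : F) * x (π.symm (π j)))
      = (algebraMap F K) (B.mulVec (fun i' => H i' j) i) * x j := by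
    intro j
    rw [Equiv.symm_apply_apply, ← mul_assoc, ← map_mul, hπ]
    congr 2
    have := congrFun (hPj j) i
    simpa [mul_comm] using this
  rw [Finset.sum_congr rfl fun j _ => hLHS j]
  have hRHS : ∀ l j, (algebraMap F K) (B i l) * ((algebraMap F K) (H l j) * x j)
      = (algebraMap F K) (B i l * H l j) * x j := by
    intro l j; rw [map_mul, mul_assoc]
  simp_rw [Finset.mul_sum]
  rw [Finset.sum_comm]
  congr 1
  funext j
  rw [Finset.sum_congr rfl fun l _ => hRHS l j, ← Finset.sum_mul, ← map_sum]
  rfl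

theorem distToCode_eq_finrank {m n : ℕ} {F K : Type*} [Field F] [DecidableEq F]
    [Field K] [Fintype K] [DecidableEq K] [Algebra F K]
    (H : Matrix (Fin m) (Fin n) F)
    (pg : ∀ y : Fin m → F, y ≠ 0 → ∃ p : Fin n × Fˣ, (p.2 : F) • (fun i => H i p.1) = y)
    (j0 : Fin n) (v : Fin n → K) :
    distToCode {x : Fin n → K | (H.map (algebraMap F K)).mulVec x = 0} v =
      Module.finrank F (Submodule.span F (Set.range ((H.map (algebraMap F K)).mulVec v))) := by
  unfold distToCode
  apply le_antisymm
  · obtain ⟨c, hc, hd⟩ := exists_close_codeword H pg j0 v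
    exact le_trans (Nat.sInf_le ⟨c, hc, rfl⟩) hd
  · have hmem : hammingDist v 0 ∈ {d : ℕ | ∃ c ∈ {x : Fin n → K |
        (H.map (algebraMap F K)).mulVec x = 0}, hammingDist v c = d} :=
      ⟨0, by simp [Set.mem_setOf_eq, Matrix.mulVec_zero], rfl⟩
    apply le_csInf ⟨_, hmem⟩
    rintro d ⟨c, hc, rfl⟩
    exact rank_le_dist H v c hc


/-- The lifted Hamming code `C_{(m,r)}` is `(r,q)`-completely transitive:
any two vectors at the same distance from the code are related, modulo the code, by an
automorphism from the group generated by code-preserving monomial maps and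
coordinatewise `F_q`-linear automorphisms. -/
theorem lifted_hamming_rq_completely_transitive {q m r n : ℕ} (hm : 1 ≤ m) (hr : 1 ≤ r)
    (F K : Type) [Field F] [Fintype F] [DecidableEq F]
    [Field K] [Fintype K] [DecidableEq K] [Algebra F K]
    (hq : Fintype.card F = q)
    (hrank : Module.finrank F K = r)
    (H : Matrix (Fin m) (Fin n) F)
    (hcols : ∀ j, (fun i => H i j) ≠ 0)
    (hind : ∀ j₁ j₂, j₁ ≠ j₂ → ∀ c : F, (fun i => H i j₂) ≠ c • (fun i => H i j₁))
    (hn : n * (q - 1) = q ^ m - 1)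
    (v w : Fin n → K)
    (hvw : distToCode {x : Fin n → K | (H.map (algebraMap F K)).mulVec x = 0} v =
           distToCode {x : Fin n → K | (H.map (algebraMap F K)).mulVec x = 0} w) :
    ∃ f ∈ AddSubgroup.closure {f : AddAut (Fin n → K) |
        (∀ x : Fin n → K, (H.map (algebraMap F K)).mulVec (f x) = 0 ↔
          (H.map (algebraMap F K)).mulVec x = 0) ∧
        (IsMonomialMap f ∨ IsSemilinearMap F f)},
      (H.map (algebraMap F K)).mulVec (w - f v) = 0 := by
  classical
  have hq2 : 1 < q := by rw [← hq]; exact Fintype.one_lt_card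
  have hn0 : 0 < n := by
    rcases Nat.eq_zero_or_pos n with h | h
    · exfalso
      subst h
      have hpow : 1 < q ^ m := Nat.one_lt_pow (by omega) hq2
      simp at hn
      omega
    · exact h
  have j0 : Fin n := ⟨0, hn0⟩
  have pg : ∀ y : Fin m → F, y ≠ 0 → ∃ p : Fin n × Fˣ, (p.2 : F) • (fun i => H i p.1) = y :=
    fun y hy => col_surj hq H hcols hind hn y hy
  rw [distToCode_eq_finrank H pg j0 v, distToCode_eq_finrank H pg j0 w] at hvw
  set s : Fin m → K := (H.map (algebraMap F K)).mulVec v with hs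
  set s' : Fin m → K := (H.map (algebraMap F K)).mulVec w with hs'
  set t := Module.finrank F (Submodule.span F (Set.range s)) with ht
  let bW : Module.Basis (Fin t) F (Submodule.span F (Set.range s)) :=
    Module.finBasis F (Submodule.span F (Set.range s))
  let bW' : Module.Basis (Fin t) F (Submodule.span F (Set.range s')) :=
    (Module.finBasis F (Submodule.span F (Set.range s'))).reindex (finCongr hvw.symm)
  let A : Fin m → Fin t → F := fun i k => bW.repr ⟨s i, Submodule.subset_span ⟨i, rfl⟩⟩ k
  let A' : Fin m → Fin t → F := fun i k => bW'.repr ⟨s' i, Submodule.subset_span ⟨i, rfl⟩⟩ k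
  have hsrep : ∀ i, s i = ∑ k, A i k • (bW k : K) := by
    intro i
    have h1 := bW.sum_repr ⟨s i, Submodule.subset_span ⟨i, rfl⟩⟩
    have h2 : ((∑ k, bW.repr ⟨s i, Submodule.subset_span ⟨i, rfl⟩⟩ k • bW k :
        Submodule.span F (Set.range s)) : K) = s i := congrArg Subtype.val h1
    rw [← h2]
    push_cast
    rfl
  have hsrep' : ∀ i, s' i = ∑ k, A' i k • (bW' k : K) := by
    intro i
    have h1 := bW'.sum_repr ⟨s' i, Submodule.subset_span ⟨i, rfl⟩⟩
    have h2 : ((∑ k, bW'.repr ⟨s' i, Submodule.subset_span ⟨i, rfl⟩⟩ k • bW' k :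
        Submodule.span F (Set.range s')) : K) = s' i := congrArg Subtype.val h1
    rw [← h2]
    push_cast
    rfl
  have hAind : LinearIndependent F (fun k => (fun i => A i k : Fin m → F)) := coeff_indep s bW
  have hA'ind : LinearIndependent F (fun k => (fun i => A' i k : Fin m → F)) := coeff_indep s' bW'
  obtain ⟨ψ, hψ⟩ := exists_linearEquiv_map_eq F hAind hA'ind
  set B : Matrix (Fin m) (Fin m) F := LinearMap.toMatrix' (ψ : (Fin m → F) →ₗ[F] (Fin m → F))
    with hB
  set B' : Matrix (Fin m) (Fin m) F :=
    LinearMap.toMatrix' (ψ.symm : (Fin m → F) →ₗ[F] (Fin m → F)) with hB'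
  have hB'B : B' * B = 1 := by
    rw [hB, hB', ← LinearMap.toMatrix'_comp]
    have : (ψ.symm : (Fin m → F) →ₗ[F] (Fin m → F)).comp
        (ψ : (Fin m → F) →ₗ[F] (Fin m → F)) = LinearMap.id := by
      ext x
      simp
    rw [this, LinearMap.toMatrix'_id]
  have hBmul : ∀ y : Fin m → F, B.mulVec y = ψ y := by
    intro y
    rw [hB, ← Matrix.toLin'_apply, Matrix.toLin'_toMatrix']
    rfl
  have hbWind : LinearIndependent F (fun k => (bW k : K)) :=
    bW.linearIndependent.map' (Submodule.span F (Set.range s)).subtype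
      (Submodule.ker_subtype _)
  have hbW'ind : LinearIndependent F (fun k => (bW' k : K)) :=
    bW'.linearIndependent.map' (Submodule.span F (Set.range s')).subtype
      (Submodule.ker_subtype _)
  obtain ⟨g, hg⟩ := exists_linearEquiv_map_eq F (V := K) hbWind hbW'ind
  obtain ⟨f1, hf1sem, hf1⟩ := exists_semilinear H g
  obtain ⟨f2, hf2mon, hf2⟩ := exists_monomial (K := K) H hcols hind pg B B' hB'B
  refine ⟨f2 + f1, ?_, ?_⟩
  · apply AddSubgroup.add_mem
    · apply AddSubgroup.subset_closure
      refine ⟨fun x => ?_, Or.inl hf2mon⟩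
      have hBKleft : ∀ y : Fin m → K,
          (B'.map (algebraMap F K)).mulVec ((B.map (algebraMap F K)).mulVec y) = y := by
        intro y
        rw [Matrix.mulVec_mulVec, ← Matrix.map_mul, hB'B,
          Matrix.map_one _ (map_zero _) (map_one _), Matrix.one_mulVec]
      rw [hf2 x]
      constructor
      · intro h0
        have h1 := congrArg (fun y => (B'.map (algebraMap F K)).mulVec y) h0
        simp only [hBKleft, Matrix.mulVec_zero] at h1
        exact h1
      · intro h0
        rw [h0, Matrix.mulVec_zero]
    · apply AddSubgroup.subset_closure
      refine ⟨fun x => ?_, Or.inr hf1sem⟩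
      rw [hf1 x]
      constructor
      · intro h0
        funext i
        have h1 := congrFun h0 i
        simp only [Pi.zero_apply] at h1 ⊢
        exact g.injective (by rw [h1, map_zero])
      · intro h0
        funext i
        rw [congrFun h0 i]
        simp
  · have happ : (f2 + f1) v = f2 (f1 v) := rfl
    rw [Matrix.mulVec_sub, happ, hf2, hf1, ← hs, ← hs']
    have hgs : (fun i => g (s i)) = fun i => ∑ k, A i k • (bW' k : K) := by
      funext i
      rw [hsrep i, map_sum]
      congr 1
      funext k
      rw [map_smul, hg]
    rw [hgs]
    have hfinal : (B.map (algebraMap F K)).mulVec (fun i => ∑ k, A i k • (bW' k : K)) = s' := by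
      funext i
      show ∑ l, algebraMap F K (B i l) * ∑ k, A l k • (bW' k : K) = s' i
      rw [hsrep' i]
      simp_rw [Finset.mul_sum]
      rw [Finset.sum_comm]
      congr 1
      funext k
      have hterm : ∀ l, algebraMap F K (B i l) * (A l k • (bW' k : K))
          = (B i l * A l k) • (bW' k : K) := by
        intro l
        rw [Algebra.smul_def, Algebra.smul_def, map_mul, mul_assoc]
      rw [Finset.sum_congr rfl fun l _ => hterm l, ← Finset.sum_smul]
      congr 1
      have hb : B.mulVec (fun l => A l k) = fun i => A' i k := by
        rw [hBmul]; exact hψ k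
      have hb2 := congrFun hb i
      simpa [Matrix.mulVec, dotProduct] using hb2
    rw [hfinal, sub_self]
end
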